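/- arXiv:2003.05667 — 6 statements merged into one kernel-verified Lean document; each statement's English description precedes it below -/
import Mathlib

section
/- For real numbers a > 0, r > 0 and bounds l, m with −a ≤ l ≤ m ≤ a, define S = {(x,y) ∈ ℝ² : l ≤ x ≤ m, |y| ≤ a, |y − x| ≤ r}. Suppose l + r ≤ a. If (x°, y°) ∈ ℝ² satisfies y° ≥ l + r and x° + y° ≤ 2l + r, then the Euclidean projection of (x°, y°) onto S equals the corner point (l, l + r). -/
/-- `p` is the Euclidean projection of `z` onto `C`. -/
def IsProj {n : ℕ} (C : Set (EuclideanSpace ℝ (Fin n)))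
    (z p : EuclideanSpace ℝ (Fin n)) : Prop :=
  p ∈ C ∧ ∀ w ∈ C, dist z p ≤ dist z w

/-- corner-region case `C₁` of the two-dimensional projection onto
`S = {(x,y) : l ≤ x ≤ m, |y| ≤ a, |y − x| ≤ r}`: if `l + r ≤ a` and `(x°,y°)` satisfies
`y° ≥ l + r` and `x° + y° ≤ 2l + r`, then its Euclidean projection onto `S` is the
corner point `(l, l + r)`. -/
theorem projection_corner_c1
    (a r l m : ℝ) (ha : 0 < a) (hr : 0 < r)
    (hla : -a ≤ l) (hlm : l ≤ m) (hma : m ≤ a) (hcorner : l + r ≤ a)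
    (S : Set (EuclideanSpace ℝ (Fin 2)))
    (hS : S = {p | l ≤ p 0 ∧ p 0 ≤ m ∧ |p 1| ≤ a ∧ |p 1 - p 0| ≤ r})
    (x0 y0 : ℝ) (hy : l + r ≤ y0) (hxy : x0 + y0 ≤ 2 * l + r) :
    IsProj S (WithLp.toLp 2 ![x0, y0] : EuclideanSpace ℝ (Fin 2))
      (WithLp.toLp 2 ![l, l + r] : EuclideanSpace ℝ (Fin 2)) := by
  subst hS
  constructor
  · simp only [Set.mem_setOf_eq, PiLp.toLp_apply, Matrix.cons_val_zero, Matrix.cons_val_one, Matrix.head_cons]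
    refine ⟨le_refl l, hlm, ?_, ?_⟩
    · rw [abs_le]; constructor <;> linarith
    · rw [abs_le]; constructor <;> linarith
  · intro w hw
    simp only [Set.mem_setOf_eq] at hw
    obtain ⟨h1, h2, h3, h4⟩ := hw
    rw [abs_le] at h3 h4
    rw [EuclideanSpace.dist_eq, EuclideanSpace.dist_eq]
    apply Real.sqrt_le_sqrt
    rw [Fin.sum_univ_two, Fin.sum_univ_two]
    simp only [PiLp.toLp_apply, Matrix.cons_val_zero, Matrix.cons_val_one, Matrix.head_cons, Real.dist_eq]
    rw [sq_abs, sq_abs, sq_abs, sq_abs]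
    nlinarith [mul_nonneg (sub_nonneg.2 h1) (by linarith : (0:ℝ) ≤ 2 * l + r - (x0 + y0)),
      mul_nonneg (sub_nonneg.2 hy) (by linarith [h4.2] : (0:ℝ) ≤ w 0 + r - w 1),
      sq_nonneg (w 0 - l), sq_nonneg (w 1 - (l + r))]
end

section
/- For real numbers a > 0, r > 0 and bounds l, m with −a ≤ l ≤ m ≤ a, define S = {(x,y) ∈ ℝ² : l ≤ x ≤ m, |y| ≤ a, |y − x| ≤ r}. Suppose m − r ≥ −a. If (x°, y°) ∈ ℝ² satisfies y° ≤ m − r and x° + y° ≥ 2m − r, then the Euclidean projection of (x°, y°) onto S equals the corner point (m, m − r). -/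
/-- corner-region case `C₃` of the two-dimensional projection onto
`S = {(x,y) : l ≤ x ≤ m, |y| ≤ a, |y − x| ≤ r}`: if `m − r ≥ −a` and `(x°,y°)` satisfies
`y° ≤ m − r` and `x° + y° ≥ 2m − r`, then its Euclidean projection onto `S` is the
corner point `(m, m − r)`. -/
theorem projection_corner_c3
    (a r l m : ℝ) (ha : 0 < a) (hr : 0 < r)
    (hla : -a ≤ l) (hlm : l ≤ m) (hma : m ≤ a) (hcorner : -a ≤ m - r)
    (S : Set (EuclideanSpace ℝ (Fin 2)))
    (hS : S = {p | l ≤ p 0 ∧ p 0 ≤ m ∧ |p 1| ≤ a ∧ |p 1 - p 0| ≤ r})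
    (x0 y0 : ℝ) (hy : y0 ≤ m - r) (hxy : 2 * m - r ≤ x0 + y0) :
    IsProj S (!₂[x0, y0] : EuclideanSpace ℝ (Fin 2))
      (!₂[m, m - r] : EuclideanSpace ℝ (Fin 2)) := by
  subst hS
  constructor
  · refine ⟨hlm, le_refl m, ?_, ?_⟩ <;> rw [abs_le] <;> constructor <;>
      simp <;> linarith
  · intro w hw
    obtain ⟨h1, h2, h3, h4⟩ := hw
    rw [abs_le] at h3 h4
    rw [EuclideanSpace.dist_eq, EuclideanSpace.dist_eq]
    apply Real.sqrt_le_sqrt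
    rw [Fin.sum_univ_two, Fin.sum_univ_two]
    simp only [Matrix.cons_val_zero, Matrix.cons_val_one, Matrix.head_cons, Real.dist_eq, sq_abs]
    have key : (x0 - m) * (w 0 - m) + (y0 - (m - r)) * (w 1 - (m - r)) ≤ 0 := by
      rcases le_total (w 1 - (m - r)) 0 with ht | ht
      · nlinarith [h2, h4.2, hy, hxy]
      · nlinarith [h2, hy, hxy]
    nlinarith [key, sq_nonneg (w 0 - m), sq_nonneg (w 1 - (m - r))]
end

section
/- Let C₁ and C₂ be nonempty closed convex subsets of ℝⁿ with C₁ ∩ C₂ ≠ ∅, and let v° ∈ ℝⁿ. Define Dykstra's iterates by x_0 = v°, μ_0 = 0, γ_0 = 0, and for i ≥ 0: y_i = P_{C₁}(x_i + μ_i), μ_{i+1} = μ_i + x_i − y_i, x_{i+1} = P_{C₂}(y_i + γ_i), γ_{i+1} = γ_i + y_i − x_{i+1}. Then both sequences (x_i) and (y_i) converge to P_{C₁∩C₂}(v°), the Euclidean projection of v° onto C₁ ∩ C₂. -/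
open Filter Topology

open RealInnerProductSpace

section Helpers

open RealInnerProductSpace

variable {E : Type*} [NormedAddCommGroup E] [InnerProductSpace ℝ E]

/-- Variational inequality for metric projections onto convex sets. -/
lemma proj_varineq {C : Set E} (hC : Convex ℝ C) {z q : E} (hq : q ∈ C)
    (hmin : ∀ w ∈ C, dist z q ≤ dist z w) {c : E} (hc : c ∈ C) :
    ⟪z - q, c - q⟫ ≤ 0 := by
  by_contra h
  push_neg at h
  set a := ⟪z - q, c - q⟫ with ha
  set b := ‖c - q‖ ^ 2 with hb
  have hb0 : 0 ≤ b := sq_nonneg _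
  have key : ∀ t : ℝ, 0 < t → t ≤ 1 → 2 * t * a ≤ t ^ 2 * b := by
    intro t ht0 ht1
    have hmem : q + t • (c - q) ∈ C := by
      have := hC hq hc (by linarith : (0:ℝ) ≤ 1 - t) ht0.le (by ring)
      convert this using 1
      module
    have hd := hmin _ hmem
    rw [dist_eq_norm, dist_eq_norm] at hd
    have hrw : z - (q + t • (c - q)) = (z - q) - t • (c - q) := by module
    have h2 : ‖z - (q + t • (c - q))‖ ^ 2 = ‖z - q‖ ^ 2 - 2 * t * a + t ^ 2 * b := by
      rw [hrw, norm_sub_sq_real, real_inner_smul_right, norm_smul]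
      simp [abs_of_pos ht0]
      ring
    have hsq : ‖z - q‖ ^ 2 ≤ ‖z - (q + t • (c - q))‖ ^ 2 :=
      pow_le_pow_left₀ (norm_nonneg _) hd 2
    linarith [h2 ▸ hsq]
  rcases eq_or_lt_of_le hb0 with hb1 | hb1
  · have := key 1 one_pos le_rfl
    rw [← hb1] at this
    nlinarith
  · have ht0 : 0 < min 1 (a / b) := lt_min one_pos (div_pos h hb1)
    have := key _ ht0 (min_le_left _ _)
    have h1 : min 1 (a / b) * b ≤ a := by
      rw [← le_div_iff₀ hb1]
      exact min_le_right _ _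
    nlinarith

/-- The algebraic identity behind one step of Dykstra's algorithm. -/
lemma dykstra_step (a b c z μ γ w : E) :
    ‖c - z‖ ^ 2 - ‖a - z‖ ^ 2 + ‖a - b‖ ^ 2 + ‖b - c‖ ^ 2
      + 2 * (⟪μ, w - b⟫ + ⟪γ, a - c⟫)
      + 2 * ((⟪μ + a - b, b - z⟫ + ⟪γ + b - c, c - z⟫)
        - (⟪μ, w - z⟫ + ⟪γ, a - z⟫)) = 0 := by
  simp only [norm_sub_sq_real, inner_add_left, inner_sub_left, inner_sub_right,
    real_inner_comm, ← real_inner_self_eq_norm_sq]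
  ring_nf

lemma exists_subseq_mul_tendsto_zero {a : ℕ → ℝ} (ha : ∀ i, 0 ≤ a i) (hs : Summable a) :
    ∃ φ : ℕ → ℕ, StrictMono φ ∧ Tendsto (fun k : ℕ => ((φ k : ℝ) + 1) * a (φ k)) atTop (𝓝 0) := by
  have freq : ∀ k : ℕ, ∃ᶠ m : ℕ in atTop, ((m : ℝ) + 1) * a m < 1 / ((k : ℝ) + 1) := by
    intro k
    rw [frequently_atTop]
    intro N
    by_contra hcon
    push_neg at hcon
    have hshift : Summable (fun m : ℕ => a (m + N)) :=
      hs.comp_injective (fun p q h => by simpa using h : Function.Injective (fun m : ℕ => m + N))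
    have hshift2 : Summable (fun m : ℕ => ((k : ℝ) + 1) * a (m + N)) := hshift.mul_left _
    have hcomp : Summable (fun m : ℕ => 1 / ((m : ℝ) + N + 1)) := by
      apply Summable.of_nonneg_of_le (fun m => by positivity) (fun m => ?_) hshift2
      have hm := hcon (m + N) (Nat.le_add_left N m)
      have hp1 : (0:ℝ) < (k : ℝ) + 1 := by positivity
      have hp2 : (0:ℝ) < (m : ℝ) + N + 1 := by positivity
      have hm' : 1 / ((k:ℝ)+1) ≤ ((m:ℝ) + N + 1) * a (m + N) := by
        have := hm
        push_cast at this
        convert this using 2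
      rw [div_le_iff₀ hp1] at hm'
      rw [div_le_iff₀ hp2]
      calc (1:ℝ) ≤ ((m:ℝ) + N + 1) * a (m+N) * ((k:ℝ)+1) := hm'
        _ = ((k:ℝ)+1) * a (m+N) * ((m:ℝ)+N+1) := by ring
    have hg : Summable (fun m : ℕ => 1 / ((m : ℝ) + 1)) := by
      have := (summable_nat_add_iff (f := fun m : ℕ => 1 / ((m : ℝ) + 1)) N).mp ?_
      · exact this
      · convert hcomp using 2 with m
        · rfl
        push_cast
        ring
    have : Summable (fun m : ℕ => 1 / (m : ℝ)) := by
      have := (summable_nat_add_iff (f := fun m : ℕ => 1 / (m : ℝ)) 1).mp ?_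
      · exact this
      · convert hg using 2 with m
        · rfl
        push_cast
        ring
    exact Real.not_summable_one_div_natCast this
  obtain ⟨φ, hmono, hφ⟩ := Filter.extraction_forall_of_frequently freq
  refine ⟨φ, hmono, ?_⟩
  have h0 : ∀ k, 0 ≤ ((φ k : ℝ) + 1) * a (φ k) := fun k => mul_nonneg (by positivity) (ha _)
  exact squeeze_zero h0 (fun k => (hφ k).le) tendsto_one_div_add_atTop_nhds_zero_nat

lemma sq_tendsto_zero {α : Type*} {l : Filter α} {g : α → ℝ}
    (h : Tendsto (fun i => g i ^ 2) l (𝓝 0)) (hg : ∀ i, 0 ≤ g i) :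
    Tendsto g l (𝓝 0) := by
  have h2 := (Real.continuous_sqrt.tendsto 0).comp h
  rw [Real.sqrt_zero] at h2
  refine h2.congr fun i => ?_
  simp [Function.comp, Real.sqrt_sq (hg i)]


end Helpers

/-- Dykstra's alternating projection algorithm for two nonempty closed
convex sets `C₁, C₂ ⊆ ℝⁿ` with nonempty intersection: both iterate sequences `(x_i)`
and `(y_i)` converge to the Euclidean projection of `v°` onto `C₁ ∩ C₂`. -/
theorem dykstra_converges
    (n : ℕ) (C₁ C₂ : Set (EuclideanSpace ℝ (Fin n)))
    (hC₁ne : C₁.Nonempty) (hC₁cl : IsClosed C₁) (hC₁conv : Convex ℝ C₁)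
    (hC₂ne : C₂.Nonempty) (hC₂cl : IsClosed C₂) (hC₂conv : Convex ℝ C₂)
    (hinter : (C₁ ∩ C₂).Nonempty)
    (P₁ P₂ : EuclideanSpace ℝ (Fin n) → EuclideanSpace ℝ (Fin n))
    (hP₁ : ∀ z, IsProj C₁ z (P₁ z)) (hP₂ : ∀ z, IsProj C₂ z (P₂ z))
    (v0 : EuclideanSpace ℝ (Fin n))
    (x y μ γ : ℕ → EuclideanSpace ℝ (Fin n))
    (hx0 : x 0 = v0) (hμ0 : μ 0 = 0) (hγ0 : γ 0 = 0)
    (hy : ∀ i, y i = P₁ (x i + μ i))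
    (hμ : ∀ i, μ (i + 1) = μ i + x i - y i)
    (hx : ∀ i, x (i + 1) = P₂ (y i + γ i))
    (hγ : ∀ i, γ (i + 1) = γ i + y i - x (i + 1))
    (pStar : EuclideanSpace ℝ (Fin n)) (hpStar : IsProj (C₁ ∩ C₂) v0 pStar) :
    Tendsto x atTop (𝓝 pStar) ∧ Tendsto y atTop (𝓝 pStar) := by
  set e : ℕ → EuclideanSpace ℝ (Fin n) := fun i => x i - y i with he
  set f : ℕ → EuclideanSpace ℝ (Fin n) := fun i => y i - x (i + 1) with hf
  set d : ℕ → ℝ := fun i => ⟪μ i, y (i - 1) - y i⟫ + ⟪γ i, x i - x (i + 1)⟫ with hd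
  set B : ℕ → ℝ := fun m => ⟪μ m, y (m - 1) - pStar⟫ + ⟪γ m, x m - pStar⟫ with hB
  set K : ℝ := ‖v0 - pStar‖ ^ 2 with hKdef
  clear_value e f d B K
  have hyC : ∀ i, y i ∈ C₁ := fun i => (hy i) ▸ (hP₁ _).1
  have hxC : ∀ i, x (i + 1) ∈ C₂ := fun i => (hx i) ▸ (hP₂ _).1
  have hpC : pStar ∈ C₁ ∩ C₂ := hpStar.1
  have hVIp : ∀ c ∈ C₁ ∩ C₂, ⟪v0 - pStar, c - pStar⟫ ≤ 0 := fun c hc =>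
    proj_varineq (hC₁conv.inter hC₂conv) hpStar.1 hpStar.2 hc
  have hK1 : ∀ i, ∀ c ∈ C₁, ⟪μ (i + 1), c - y i⟫ ≤ 0 := by
    intro i c hc
    have h1 : μ (i + 1) = (x i + μ i) - y i := by rw [hμ i]; abel
    rw [h1, hy i]
    exact proj_varineq hC₁conv (hP₁ _).1 (hP₁ _).2 hc
  have hK2 : ∀ i, ∀ c ∈ C₂, ⟪γ (i + 1), c - x (i + 1)⟫ ≤ 0 := by
    intro i c hc
    have h1 : γ (i + 1) = (y i + γ i) - x (i + 1) := by rw [hγ i]; abel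
    rw [h1, hx i]
    exact proj_varineq hC₂conv (hP₂ _).1 (hP₂ _).2 hc
  have hinv : ∀ m, μ m + γ m = v0 - x m := by
    intro m
    induction m with
    | zero => rw [hμ0, hγ0, hx0]; abel
    | succ m ih =>
      rw [hμ m, hγ m, ← hx0]
      have : μ m + x m - y m + (γ m + y m - x (m + 1)) = (μ m + γ m) + x m - x (m+1) := by abel
      rw [this, ih, hx0]
      abel
  have hmaster : ∀ m, ‖x m - pStar‖ ^ 2 + (∑ i ∈ Finset.range m, (‖e i‖ ^ 2 + ‖f i‖ ^ 2))
      + 2 * (∑ i ∈ Finset.range m, d i) + 2 * B m = K := by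
    intro m
    induction m with
    | zero =>
      simp [hB, hμ0, hγ0, hx0, hKdef]
    | succ m ih =>
      rw [Finset.sum_range_succ, Finset.sum_range_succ]
      have hstep := dykstra_step (x m) (y m) (x (m + 1)) pStar (μ m) (γ m) (y (m - 1))
      have hBs : B (m + 1) = ⟪μ m + x m - y m, y m - pStar⟫
          + ⟪γ m + y m - x (m + 1), x (m + 1) - pStar⟫ := by
        simp only [hB, Nat.add_sub_cancel, hμ m, hγ m]
      have hBm : B m = ⟪μ m, y (m - 1) - pStar⟫ + ⟪γ m, x m - pStar⟫ := by rw [hB]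
      have hdm : d m = ⟪μ m, y (m - 1) - y m⟫ + ⟪γ m, x m - x (m + 1)⟫ := by rw [hd]
      have hem : e m = x m - y m := by rw [he]
      have hfm : f m = y m - x (m + 1) := by rw [hf]
      rw [hem, hfm] at *
      linarith [hstep, ih, hBs, hdm, hBm]
  -- nonnegativity of d and B
  have hd0 : ∀ i, 0 ≤ d i := by
    intro i
    match i with
    | 0 => simp [hd, hμ0, hγ0]
    | (j + 1) =>
      have h1 : ⟪μ (j + 1), y (j + 1) - y j⟫ ≤ 0 := hK1 j _ (hyC (j + 1))
      have h2 : ⟪γ (j + 1), x (j + 2) - x (j + 1)⟫ ≤ 0 := hK2 j _ (hxC (j + 1))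
      have hdj : d (j + 1) = ⟪μ (j + 1), y j - y (j + 1)⟫ + ⟪γ (j + 1), x (j + 1) - x (j + 2)⟫ := by
        simp only [hd, Nat.add_sub_cancel]
      have e1 : ⟪μ (j + 1), y j - y (j + 1)⟫ = -⟪μ (j + 1), y (j + 1) - y j⟫ := by
        rw [← inner_neg_right]
        congr 1
        abel
      have e2 : ⟪γ (j + 1), x (j + 1) - x (j + 2)⟫ = -⟪γ (j + 1), x (j + 2) - x (j + 1)⟫ := by
        rw [← inner_neg_right]
        congr 1
        abel
      rw [hdj, e1, e2]
      linarith
  have hB0 : ∀ m, 0 ≤ B m := by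
    intro m
    match m with
    | 0 => simp [hB, hμ0, hγ0]
    | (j + 1) =>
      have h1 : ⟪μ (j + 1), pStar - y j⟫ ≤ 0 := hK1 j _ hpC.1
      have h2 : ⟪γ (j + 1), pStar - x (j + 1)⟫ ≤ 0 := hK2 j _ hpC.2
      have hBj : B (j + 1) = ⟪μ (j + 1), y j - pStar⟫ + ⟪γ (j + 1), x (j + 1) - pStar⟫ := by
        simp only [hB, Nat.add_sub_cancel]
      have e1 : ⟪μ (j + 1), y j - pStar⟫ = -⟪μ (j + 1), pStar - y j⟫ := by
        rw [← inner_neg_right]; congr 1; abel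
      have e2 : ⟪γ (j + 1), x (j + 1) - pStar⟫ = -⟪γ (j + 1), pStar - x (j + 1)⟫ := by
        rw [← inner_neg_right]; congr 1; abel
      rw [hBj, e1, e2]
      linarith
  have hef_nonneg : ∀ i, (0:ℝ) ≤ ‖e i‖ ^ 2 + ‖f i‖ ^ 2 := fun i => by positivity
  have hSe_nonneg : ∀ m, (0:ℝ) ≤ ∑ i ∈ Finset.range m, (‖e i‖ ^ 2 + ‖f i‖ ^ 2) :=
    fun m => Finset.sum_nonneg fun i _ => hef_nonneg i
  have hTd_nonneg : ∀ m, (0:ℝ) ≤ ∑ i ∈ Finset.range m, d i :=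
    fun m => Finset.sum_nonneg fun i _ => hd0 i
  have hxbound : ∀ m, ‖x m - pStar‖ ^ 2 ≤ K := by
    intro m
    have := hmaster m
    linarith [hSe_nonneg m, hTd_nonneg m, hB0 m]
  have hK_nonneg : (0:ℝ) ≤ K := hKdef ▸ sq_nonneg _
  have hsumef : Summable (fun i => ‖e i‖ ^ 2 + ‖f i‖ ^ 2) := by
    apply summable_of_sum_range_le (c := K) hef_nonneg
    intro m
    have := hmaster m
    linarith [hTd_nonneg m, hB0 m, sq_nonneg ‖x m - pStar‖]
  have hsumd : Summable d := by
    apply summable_of_sum_range_le (c := K) hd0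
    intro m
    have := hmaster m
    linarith [hSe_nonneg m, hB0 m, sq_nonneg ‖x m - pStar‖, hK_nonneg]
  have hsumf2 : Summable (fun i => ‖f i‖ ^ 2) :=
    Summable.of_nonneg_of_le (fun i => sq_nonneg _)
      (fun i => le_add_of_nonneg_left (sq_nonneg _)) hsumef
  -- e and f tend to zero
  have hef0 : Tendsto (fun i => ‖e i‖ ^ 2 + ‖f i‖ ^ 2) atTop (𝓝 0) := hsumef.tendsto_atTop_zero
  have he2 : Tendsto (fun i => ‖e i‖ ^ 2) atTop (𝓝 0) :=
    squeeze_zero (fun i => sq_nonneg _) (fun i => le_add_of_nonneg_right (sq_nonneg _)) hef0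
  have hf2 : Tendsto (fun i => ‖f i‖ ^ 2) atTop (𝓝 0) :=
    squeeze_zero (fun i => sq_nonneg _) (fun i => le_add_of_nonneg_left (sq_nonneg _)) hef0
  have he0 : Tendsto e atTop (𝓝 0) :=
    tendsto_zero_iff_norm_tendsto_zero.2 (sq_tendsto_zero he2 fun i => norm_nonneg _)
  have hf0 : Tendsto f atTop (𝓝 0) :=
    tendsto_zero_iff_norm_tendsto_zero.2 (sq_tendsto_zero hf2 fun i => norm_nonneg _)
  -- bound on ‖μ m‖
  have hμsum : ∀ m, μ m = ∑ i ∈ Finset.range m, e i := by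
    intro m
    induction m with
    | zero => simpa using hμ0
    | succ m ih =>
      rw [Finset.sum_range_succ, ← ih, hμ m]
      simp only [he]
      abel
  have hμbound : ∀ m, ‖μ m‖ ^ 2 ≤ (m : ℝ) * K := by
    intro m
    have h1 : ‖μ m‖ ≤ ∑ i ∈ Finset.range m, ‖e i‖ := by
      rw [hμsum m]
      exact norm_sum_le _ _
    have h2 : ‖μ m‖ ^ 2 ≤ (∑ i ∈ Finset.range m, ‖e i‖) ^ 2 :=
      pow_le_pow_left₀ (norm_nonneg _) h1 2
    have h3 : (∑ i ∈ Finset.range m, ‖e i‖) ^ 2 ≤ (m : ℝ) * ∑ i ∈ Finset.range m, ‖e i‖ ^ 2 := by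
      have h3' : (∑ i ∈ Finset.range m, ‖e i‖) ^ 2
          ≤ ((Finset.range m).card : ℝ) * ∑ i ∈ Finset.range m, ‖e i‖ ^ 2 :=
        sq_sum_le_card_mul_sum_sq
      rwa [Finset.card_range] at h3'
    have h4 : ∑ i ∈ Finset.range m, ‖e i‖ ^ 2 ≤ K := by
      have h5 : ∑ i ∈ Finset.range m, ‖e i‖ ^ 2 ≤ ∑ i ∈ Finset.range m, (‖e i‖ ^ 2 + ‖f i‖ ^ 2) :=
        Finset.sum_le_sum fun i _ => le_add_of_nonneg_right (sq_nonneg _)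
      have := hmaster m
      linarith [hTd_nonneg m, hB0 m, sq_nonneg ‖x m - pStar‖]
    have h6 : (m : ℝ) * ∑ i ∈ Finset.range m, ‖e i‖ ^ 2 ≤ (m : ℝ) * K :=
      mul_le_mul_of_nonneg_left h4 (Nat.cast_nonneg m)
    linarith
  -- limits of partial sums
  have hSelim : Tendsto (fun m => ∑ i ∈ Finset.range m, (‖e i‖ ^ 2 + ‖f i‖ ^ 2)) atTop
      (𝓝 (∑' i, (‖e i‖ ^ 2 + ‖f i‖ ^ 2))) := hsumef.hasSum.tendsto_sum_nat
  have hTdlim : Tendsto (fun m => ∑ i ∈ Finset.range m, d i) atTop (𝓝 (∑' i, d i)) :=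
    hsumd.hasSum.tendsto_sum_nat
  set L : ℝ := K - (∑' i, (‖e i‖ ^ 2 + ‖f i‖ ^ 2)) - 2 * (∑' i, d i) with hL
  have hG : Tendsto (fun m => ‖x m - pStar‖ ^ 2 + 2 * B m) atTop (𝓝 L) := by
    have h1 : Tendsto (fun m => K - (∑ i ∈ Finset.range m, (‖e i‖ ^ 2 + ‖f i‖ ^ 2))
        - 2 * ∑ i ∈ Finset.range m, d i) atTop (𝓝 L) :=
      (tendsto_const_nhds.sub hSelim).sub (hTdlim.const_mul 2)
    exact h1.congr fun m => by linarith [hmaster m]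
  have hL0 : 0 ≤ L :=
    ge_of_tendsto' hG fun m => add_nonneg (sq_nonneg _) (by linarith [hB0 m])
  -- choose a good subsequence
  obtain ⟨φ, hφmono, hφ0⟩ := exists_subseq_mul_tendsto_zero (fun i => sq_nonneg ‖f i‖) hsumf2
  have hball : ∀ k : ℕ, x (φ k + 1) ∈ Metric.closedBall pStar (Real.sqrt K) := by
    intro k
    rw [Metric.mem_closedBall, dist_eq_norm]
    have h1 := hxbound (φ k + 1)
    nlinarith [Real.sq_sqrt hK_nonneg, Real.sqrt_nonneg K, norm_nonneg (x (φ k + 1) - pStar)]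
  obtain ⟨xbar, -, ψ, hψmono, hψlim0⟩ :=
    tendsto_subseq_of_bounded Metric.isBounded_closedBall hball
  have hψlim : Tendsto (fun k => x (φ (ψ k) + 1)) atTop (𝓝 xbar) := hψlim0
  have hκtop : Tendsto (fun k => φ (ψ k)) atTop atTop := (hφmono.comp hψmono).tendsto_atTop
  have hfκ : Tendsto (fun k => f (φ (ψ k))) atTop (𝓝 0) := hf0.comp hκtop
  have hyκ : Tendsto (fun k => y (φ (ψ k))) atTop (𝓝 xbar) := by
    have h2 := hψlim.add hfκ
    rw [add_zero] at h2
    exact h2.congr fun k => by simp only [hf]; abel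
  have hxbarC2 : xbar ∈ C₂ :=
    hC₂cl.mem_of_tendsto hψlim (Filter.Eventually.of_forall fun k => hxC (φ (ψ k)))
  have hxbarC1 : xbar ∈ C₁ :=
    hC₁cl.mem_of_tendsto hyκ (Filter.Eventually.of_forall fun k => hyC (φ (ψ k)))
  -- alternative form of B
  have hBalt : ∀ m, B (m + 1) = ⟪μ (m + 1), f m⟫ + ⟪v0 - x (m + 1), x (m + 1) - pStar⟫ := by
    intro m
    have hga : γ (m + 1) = (v0 - x (m + 1)) - μ (m + 1) := by
      rw [← hinv (m + 1)]; abel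
    simp only [hB, hf, Nat.add_sub_cancel, hga, inner_sub_left, inner_sub_right]
    ring
  -- the limit along the subsequence
  have hGκ : Tendsto (fun k => ‖x (φ (ψ k) + 1) - pStar‖ ^ 2 + 2 * B (φ (ψ k) + 1)) atTop (𝓝 L) :=
    hG.comp (tendsto_atTop_mono (fun k => Nat.le_succ_of_le le_rfl) hκtop)
  have ht2 : Tendsto (fun k => ⟪μ (φ (ψ k) + 1), f (φ (ψ k))⟫) atTop (𝓝 0) := by
    have hb : ∀ k, |⟪μ (φ (ψ k) + 1), f (φ (ψ k))⟫|
        ≤ Real.sqrt (K * (((φ (ψ k) : ℝ) + 1) * ‖f (φ (ψ k))‖ ^ 2)) := by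
      intro k
      have h1 : |⟪μ (φ (ψ k) + 1), f (φ (ψ k))⟫| ≤ ‖μ (φ (ψ k) + 1)‖ * ‖f (φ (ψ k))‖ :=
        abs_real_inner_le_norm _ _
      have h3 := hμbound (φ (ψ k) + 1)
      push_cast at h3
      have h2 : (‖μ (φ (ψ k) + 1)‖ * ‖f (φ (ψ k))‖) ^ 2
          ≤ K * (((φ (ψ k) : ℝ) + 1) * ‖f (φ (ψ k))‖ ^ 2) := by
        nlinarith [sq_nonneg ‖f (φ (ψ k))‖, norm_nonneg (μ (φ (ψ k) + 1))]
      calc |⟪μ (φ (ψ k) + 1), f (φ (ψ k))⟫| ≤ ‖μ (φ (ψ k) + 1)‖ * ‖f (φ (ψ k))‖ := h1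
        _ = Real.sqrt ((‖μ (φ (ψ k) + 1)‖ * ‖f (φ (ψ k))‖) ^ 2) :=
          (Real.sqrt_sq (by positivity)).symm
        _ ≤ Real.sqrt (K * (((φ (ψ k) : ℝ) + 1) * ‖f (φ (ψ k))‖ ^ 2)) := Real.sqrt_le_sqrt h2
    have hzn : Tendsto (fun k => ((φ (ψ k) : ℝ) + 1) * ‖f (φ (ψ k))‖ ^ 2) atTop (𝓝 0) :=
      hφ0.comp hψmono.tendsto_atTop
    have h4 : Tendsto (fun k => K * (((φ (ψ k) : ℝ) + 1) * ‖f (φ (ψ k))‖ ^ 2)) atTop (𝓝 0) := by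
      simpa using hzn.const_mul K
    have h5 : Tendsto (fun k => Real.sqrt (K * (((φ (ψ k) : ℝ) + 1) * ‖f (φ (ψ k))‖ ^ 2)))
        atTop (𝓝 0) := by
      have h6 := (Real.continuous_sqrt.tendsto 0).comp h4
      rw [Real.sqrt_zero] at h6
      exact h6
    exact squeeze_zero_norm (fun k => by rw [Real.norm_eq_abs]; exact hb k) h5
  have ht1 : Tendsto (fun k => ‖x (φ (ψ k) + 1) - pStar‖ ^ 2) atTop (𝓝 (‖xbar - pStar‖ ^ 2)) :=
    ((hψlim.sub tendsto_const_nhds).norm).pow 2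
  have ht3 : Tendsto (fun k => ⟪v0 - x (φ (ψ k) + 1), x (φ (ψ k) + 1) - pStar⟫) atTop
      (𝓝 ⟪v0 - xbar, xbar - pStar⟫) :=
    (tendsto_const_nhds.sub hψlim).inner (hψlim.sub tendsto_const_nhds)
  have hcomb : Tendsto (fun k => ‖x (φ (ψ k) + 1) - pStar‖ ^ 2 + 2 * B (φ (ψ k) + 1)) atTop
      (𝓝 (‖xbar - pStar‖ ^ 2 + 2 * (0 + ⟪v0 - xbar, xbar - pStar⟫))) := by
    have h7 := ht1.add ((ht2.add ht3).const_mul 2)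
    exact h7.congr fun k => by rw [hBalt (φ (ψ k))]
  have hLeq : L = ‖xbar - pStar‖ ^ 2 + 2 * (0 + ⟪v0 - xbar, xbar - pStar⟫) :=
    tendsto_nhds_unique hGκ hcomb
  have hsplit : ⟪v0 - xbar, xbar - pStar⟫ = ⟪v0 - pStar, xbar - pStar⟫ - ‖xbar - pStar‖ ^ 2 := by
    have h8 : v0 - xbar = (v0 - pStar) - (xbar - pStar) := by abel
    rw [h8, inner_sub_left, real_inner_self_eq_norm_sq]
  have hVIx : ⟪v0 - pStar, xbar - pStar⟫ ≤ 0 := hVIp xbar ⟨hxbarC1, hxbarC2⟩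
  have hLzero : L = 0 := by
    have hLle : L ≤ 0 := by
      rw [hLeq, hsplit]
      linarith [sq_nonneg ‖xbar - pStar‖]
    linarith
  -- conclusion
  have hxsq : Tendsto (fun m => ‖x m - pStar‖ ^ 2) atTop (𝓝 0) := by
    refine squeeze_zero (fun m => sq_nonneg _) (fun m => ?_) (hLzero ▸ hG)
    linarith [hB0 m]
  have hxnorm : Tendsto (fun m => ‖x m - pStar‖) atTop (𝓝 0) :=
    sq_tendsto_zero hxsq fun m => norm_nonneg _
  have hxlim : Tendsto x atTop (𝓝 pStar) := by
    rw [tendsto_iff_norm_sub_tendsto_zero]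
    exact hxnorm
  have hylim : Tendsto y atTop (𝓝 pStar) := by
    have h9 := hxlim.sub he0
    rw [sub_zero] at h9
    exact h9.congr fun m => by simp only [he]; abel
  exact ⟨hxlim, hylim⟩
end

section
/- Fix an integer N ≥ 1, an amplitude bound a > 0, a rate bound r with 0 < r ≤ 2a, and a previous input u₋₁ ∈ ℝ with |u₋₁| ≤ a. Define a⁰_min = max(−a, u₋₁ − r), a⁰_max = min(a, u₋₁ + r), U_1 = {u ∈ ℝ^{N+1} : a⁰_min ≤ u_0 ≤ a⁰_max, |u_1| ≤ a, |u_1 − u_0| ≤ r}, and for 2 ≤ k ≤ N, U_k = {u ∈ ℝ^{N+1} : |u_{k−1}| ≤ a, |u_k| ≤ a, |u_k − u_{k−1}| ≤ r}. Let U_o be the intersection of the U_k with odd k and U_e the intersection of the U_k with even k. Then for any v° ∈ ℝ^{N+1}, the Dykstra iterates x_0 = v°, μ_0 = γ_0 = 0, y_i = P_{U_e}(x_i + μ_i), μ_{i+1} = μ_i + x_i − y_i, x_{i+1} = P_{U_o}(y_i + γ_i), γ_{i+1} = γ_i + y_i − x_{i+1} converge to P_U(v°), the Euclidean projection of v° onto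 the input rate and amplitude constraint set U. -/
open Filter Topology

/-- The input rate and amplitude constraint set. -/
def rateAmpSet (N : ℕ) (a r uprev : ℝ) : Set (EuclideanSpace ℝ (Fin (N + 1))) :=
  {u | (∀ k, |u k| ≤ a) ∧ |u 0 - uprev| ≤ r ∧
    ∀ k : Fin N, |u k.succ - u k.castSucc| ≤ r}

/-- The set `U_1 = {u : a⁰_min ≤ u_0 ≤ a⁰_max, |u_1| ≤ a, |u_1 - u_0| ≤ r}` with
`a⁰_min = max(−a, u₋₁ − r)` and `a⁰_max = min(a, u₋₁ + r)`. -/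
def U1set (N : ℕ) (hN : 1 ≤ N) (a r uprev : ℝ) : Set (EuclideanSpace ℝ (Fin (N + 1))) :=
  {u | max (-a) (uprev - r) ≤ u 0 ∧ u 0 ≤ min a (uprev + r) ∧
    |u ⟨1, by omega⟩| ≤ a ∧ |u ⟨1, by omega⟩ - u 0| ≤ r}

/-- For `2 ≤ k ≤ N`, the set `U_k = {u : |u_{k−1}| ≤ a, |u_k| ≤ a, |u_k − u_{k−1}| ≤ r}`. -/
def pairSet (N : ℕ) (a r : ℝ) (k : ℕ) (h1 : 1 ≤ k) (h2 : k ≤ N) :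
    Set (EuclideanSpace ℝ (Fin (N + 1))) :=
  {u | |u ⟨k - 1, by omega⟩| ≤ a ∧ |u ⟨k, by omega⟩| ≤ a ∧
    |u ⟨k, by omega⟩ - u ⟨k - 1, by omega⟩| ≤ r}

/-- `U_e`: intersection of the sets `U_k` with even `k`, `2 ≤ k ≤ N`. -/
def evenInter (N : ℕ) (a r : ℝ) : Set (EuclideanSpace ℝ (Fin (N + 1))) :=
  ⋂ (k : ℕ) (h : Even k ∧ 2 ≤ k ∧ k ≤ N), pairSet N a r k (by omega) h.2.2

/-- `U_o`: intersection of the sets `U_k` with odd `k`, `1 ≤ k ≤ N` (where `U_1` is the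
special first set). -/
def oddInter (N : ℕ) (hN : 1 ≤ N) (a r uprev : ℝ) :
    Set (EuclideanSpace ℝ (Fin (N + 1))) :=
  U1set N hN a r uprev ∩
    ⋂ (k : ℕ) (h : Odd k ∧ 2 ≤ k ∧ k ≤ N), pairSet N a r k (by omega) h.2.2

/-! ### Auxiliary lemmas -/

local notation "⟪" x ", " y "⟫" => @inner ℝ _ _ x y

section Aux

variable {n : ℕ}

lemma inner_coord (u v : EuclideanSpace ℝ (Fin n)) : ⟪u, v⟫ = ∑ i, u i * v i := by
  simp [PiLp.inner_apply, RCLike.inner_apply, conj_trivial]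
  exact Finset.sum_congr rfl fun i _ => mul_comm _ _

lemma normsq_coord (u : EuclideanSpace ℝ (Fin n)) : ‖u‖ ^ 2 = ∑ i, u i * u i := by
  rw [← real_inner_self_eq_norm_sq, inner_coord]

lemma algStep (x y x' y' μ γ w : EuclideanSpace ℝ (Fin n)) :
    ‖x - w‖ ^ 2 + 2 * ⟪μ, y' - w⟫ + 2 * ⟪γ, x - w⟫
      = ‖x' - w‖ ^ 2 + 2 * ⟪μ + x - y, y - w⟫ + 2 * ⟪γ + y - x', x' - w⟫
        + (‖x - y‖ ^ 2 + ‖y - x'‖ ^ 2) + 2 * (⟪μ, y' - y⟫ + ⟪γ, x - x'⟫) := by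
  simp only [normsq_coord, inner_coord, Finset.mul_sum, ← Finset.sum_add_distrib]
  apply Finset.sum_congr rfl
  intro i _
  simp only [PiLp.sub_apply, PiLp.add_apply]
  ring

lemma algBase (x0 y0 x1 w : EuclideanSpace ℝ (Fin n)) :
    ‖x0 - w‖ ^ 2 = ‖x1 - w‖ ^ 2 + 2 * ⟪x0 - y0, y0 - w⟫ + 2 * ⟪y0 - x1, x1 - w⟫
      + (‖x0 - y0‖ ^ 2 + ‖y0 - x1‖ ^ 2) := by
  simp only [normsq_coord, inner_coord, Finset.mul_sum, ← Finset.sum_add_distrib]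
  apply Finset.sum_congr rfl
  intro i _
  simp only [PiLp.sub_apply]
  ring

lemma isProj_inner_le {C : Set (EuclideanSpace ℝ (Fin n))}
    (hC : Convex ℝ C) {z p : EuclideanSpace ℝ (Fin n)} (hp : IsProj C z p)
    {w : EuclideanSpace ℝ (Fin n)} (hw : w ∈ C) : ⟪z - p, w - p⟫ ≤ 0 := by
  by_contra hcon
  push_neg at hcon
  set c : ℝ := ⟪z - p, w - p⟫ with hc
  set K : ℝ := ‖w - p‖ ^ 2 with hK
  have hK0 : 0 ≤ K := sq_nonneg _
  set t : ℝ := min 1 (c / (K + 1)) with ht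
  have ht0 : 0 < t := lt_min one_pos (div_pos hcon (by linarith))
  have ht1 : t ≤ 1 := min_le_left _ _
  have hmem : p + t • (w - p) ∈ C := by
    have := hC hp.1 hw (a := 1 - t) (b := t) (by linarith) (le_of_lt ht0) (by ring)
    convert this using 1
    module
  have hdist := hp.2 _ hmem
  rw [dist_eq_norm, dist_eq_norm] at hdist
  have hsq : ‖z - p‖ ^ 2 ≤ ‖z - (p + t • (w - p))‖ ^ 2 := by
    have h1 : (0:ℝ) ≤ ‖z - p‖ := norm_nonneg _
    nlinarith [norm_nonneg (z - (p + t • (w - p)))]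
  have hexp : ‖z - (p + t • (w - p))‖ ^ 2
      = ‖z - p‖ ^ 2 - 2 * t * c + t ^ 2 * K := by
    have : z - (p + t • (w - p)) = (z - p) + (-t) • (w - p) := by module
    rw [this, norm_add_sq_real, real_inner_smul_right, norm_smul]
    simp [hc, hK, mul_pow]
    ring
  have h2 : 2 * c ≤ t * K := by
    rw [hexp] at hsq
    have h5 : 2 * t * c ≤ t ^ 2 * K := by linarith
    have h4 : 0 < t := ht0
    nlinarith [h5]
  have h3 : t * K < c := by
    calc t * K ≤ (c / (K + 1)) * K := by
          apply mul_le_mul_of_nonneg_right (min_le_right _ _) hK0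
    _ < c := by rw [div_mul_eq_mul_div, div_lt_iff₀ (by linarith)]; nlinarith
  linarith

lemma freq_mul_lt {b : ℕ → ℝ} (hb : Summable b) {ε : ℝ} (hε : 0 < ε) :
    ∃ᶠ n : ℕ in atTop, (n : ℝ) * b n < ε := by
  by_contra hcon
  rw [not_frequently] at hcon
  simp only [not_lt] at hcon
  obtain ⟨M, hM⟩ := eventually_atTop.mp hcon
  have hsum : Summable (fun n : ℕ => b (n + (M + 1))) := (summable_nat_add_iff _).2 hb
  have hcomp : Summable (fun n : ℕ => ε * (((n : ℝ)) + (M + 1))⁻¹) := by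
    apply Summable.of_nonneg_of_le (fun n => by positivity) _ hsum
    intro n
    have h1 : ε ≤ ((n + (M + 1) : ℕ) : ℝ) * b (n + (M + 1)) := hM _ (by omega)
    have h2 : (0:ℝ) < ((n : ℝ) + (M + 1)) := by positivity
    have h3 : ((n + (M + 1) : ℕ) : ℝ) = (n : ℝ) + (M + 1) := by push_cast; ring
    rw [h3] at h1
    rw [mul_inv_le_iff₀' h2]
    linarith [h1]
  have h3 : Summable (fun n : ℕ => (((n : ℝ)) + (M + 1))⁻¹) := by
    have := hcomp.mul_left ε⁻¹
    simpa [← mul_assoc, inv_mul_cancel₀ (ne_of_gt hε)] using this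
  have h4 : Summable (fun n : ℕ => ((n : ℕ) : ℝ)⁻¹) := by
    apply (summable_nat_add_iff (M + 1)).1
    convert h3 using 2 with n
    · rfl
    · push_cast; ring
  exact Real.not_summable_natCast_inv h4

lemma exists_subseq_mul_tendsto {b : ℕ → ℝ} (hb0 : ∀ n, 0 ≤ b n) (hb : Summable b) :
    ∃ φ : ℕ → ℕ, StrictMono φ ∧
      Tendsto (fun j => ((φ j : ℝ) + 1) * b (φ j)) atTop (𝓝 0) := by
  have hfreq : ∀ j : ℕ, ∃ᶠ n : ℕ in atTop, (n : ℝ) * b n < ((j : ℝ) + 1)⁻¹ :=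
    fun j => freq_mul_lt hb (by positivity)
  obtain ⟨φ, hmono, hφ⟩ := extraction_forall_of_frequently hfreq
  refine ⟨φ, hmono, ?_⟩
  have hb_tendsto : Tendsto (fun j => b (φ j)) atTop (𝓝 0) :=
    (hb.tendsto_atTop_zero).comp hmono.tendsto_atTop
  have h1 : Tendsto (fun j => (φ j : ℝ) * b (φ j)) atTop (𝓝 0) := by
    apply squeeze_zero (fun j => mul_nonneg (by positivity) (hb0 _)) (fun j => le_of_lt (hφ j))
    exact tendsto_one_div_add_atTop_nhds_zero_nat.congr (by intro n; rw [one_div])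
  have he : (fun j => ((φ j : ℝ) + 1) * b (φ j))
      = fun j => (φ j : ℝ) * b (φ j) + b (φ j) := by funext j; ring
  rw [he]
  simpa using h1.add hb_tendsto

end Aux

section Sets

variable {N : ℕ} {a r uprev : ℝ}

lemma convex_absCoord (i : Fin (N+1)) (c : ℝ) :
    Convex ℝ {u : EuclideanSpace ℝ (Fin (N+1)) | |u i| ≤ c} := by
  intro u hu v hv s t hs ht hst
  simp only [Set.mem_setOf_eq, PiLp.add_apply, PiLp.smul_apply, smul_eq_mul] at *
  calc |s * u i + t * v i| ≤ |s * u i| + |t * v i| := abs_add_le _ _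
    _ = s * |u i| + t * |v i| := by rw [abs_mul, abs_mul, abs_of_nonneg hs, abs_of_nonneg ht]
    _ ≤ s * c + t * c :=
        add_le_add (mul_le_mul_of_nonneg_left hu hs) (mul_le_mul_of_nonneg_left hv ht)
    _ = c := by rw [← add_mul, hst, one_mul]

lemma convex_absDiff (i j : Fin (N+1)) (c : ℝ) :
    Convex ℝ {u : EuclideanSpace ℝ (Fin (N+1)) | |u i - u j| ≤ c} := by
  intro u hu v hv s t hs ht hst
  simp only [Set.mem_setOf_eq, PiLp.add_apply, PiLp.smul_apply, smul_eq_mul] at *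
  have e : s * u i + t * v i - (s * u j + t * v j) = s * (u i - u j) + t * (v i - v j) := by ring
  rw [e]
  calc |s * (u i - u j) + t * (v i - v j)| ≤ |s * (u i - u j)| + |t * (v i - v j)| := abs_add_le _ _
    _ = s * |u i - u j| + t * |v i - v j| := by
        rw [abs_mul, abs_mul, abs_of_nonneg hs, abs_of_nonneg ht]
    _ ≤ s * c + t * c :=
        add_le_add (mul_le_mul_of_nonneg_left hu hs) (mul_le_mul_of_nonneg_left hv ht)
    _ = c := by rw [← add_mul, hst, one_mul]

lemma convex_pairSet (k : ℕ) (h1 : 1 ≤ k) (h2 : k ≤ N) : Convex ℝ (pairSet N a r k h1 h2) := by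
  have e : pairSet N a r k h1 h2 =
      {u : EuclideanSpace ℝ (Fin (N+1)) | |u ⟨k-1, by omega⟩| ≤ a} ∩
      ({u | |u ⟨k, by omega⟩| ≤ a} ∩ {u | |u ⟨k, by omega⟩ - u ⟨k-1, by omega⟩| ≤ r}) := rfl
  rw [e]
  exact (convex_absCoord _ _).inter ((convex_absCoord _ _).inter (convex_absDiff _ _ _))

lemma convex_U1set (hN : 1 ≤ N) : Convex ℝ (U1set N hN a r uprev) := by
  intro u hu v hv s t hs ht hst
  obtain ⟨h1, h2, h3, h4⟩ := hu
  obtain ⟨g1, g2, g3, g4⟩ := hv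
  have key : ∀ (p q c : ℝ), |p| ≤ c → |q| ≤ c → |s * p + t * q| ≤ c := by
    intro p q c hp hq
    calc |s * p + t * q| ≤ |s * p| + |t * q| := abs_add_le _ _
      _ = s * |p| + t * |q| := by rw [abs_mul, abs_mul, abs_of_nonneg hs, abs_of_nonneg ht]
      _ ≤ s * c + t * c :=
          add_le_add (mul_le_mul_of_nonneg_left hp hs) (mul_le_mul_of_nonneg_left hq ht)
      _ = c := by rw [← add_mul, hst, one_mul]
  refine ⟨?_, ?_, ?_, ?_⟩ <;>
    simp only [Set.mem_setOf_eq, PiLp.add_apply, PiLp.smul_apply, smul_eq_mul] at *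
  · set M := max (-a) (uprev - r)
    have e1 : s * M ≤ s * u 0 := mul_le_mul_of_nonneg_left h1 hs
    have e2 : t * M ≤ t * v 0 := mul_le_mul_of_nonneg_left g1 ht
    have e3 : s * M + t * M = M := by rw [← add_mul, hst, one_mul]
    linarith
  · set M := min a (uprev + r)
    have e1 : s * u 0 ≤ s * M := mul_le_mul_of_nonneg_left h2 hs
    have e2 : t * v 0 ≤ t * M := mul_le_mul_of_nonneg_left g2 ht
    have e3 : s * M + t * M = M := by rw [← add_mul, hst, one_mul]
    linarith
  · exact key _ _ _ h3 g3
  · have e : s * u ⟨1, by omega⟩ + t * v ⟨1, by omega⟩ - (s * u 0 + t * v 0)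
        = s * (u ⟨1, by omega⟩ - u 0) + t * (v ⟨1, by omega⟩ - v 0) := by ring
    rw [e]
    exact key _ _ _ h4 g4

lemma cont_coord (i : Fin (N+1)) : Continuous fun u : EuclideanSpace ℝ (Fin (N+1)) => u i :=
  (EuclideanSpace.proj i).continuous

lemma closed_pairSet (k : ℕ) (h1 : 1 ≤ k) (h2 : k ≤ N) : IsClosed (pairSet N a r k h1 h2) := by
  have e : pairSet N a r k h1 h2 =
      {u : EuclideanSpace ℝ (Fin (N+1)) | |u ⟨k-1, by omega⟩| ≤ a} ∩
      ({u | |u ⟨k, by omega⟩| ≤ a} ∩ {u | |u ⟨k, by omega⟩ - u ⟨k-1, by omega⟩| ≤ r}) := rfl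
  rw [e]
  exact IsClosed.inter (isClosed_le (cont_coord _).abs continuous_const)
    (IsClosed.inter (isClosed_le (cont_coord _).abs continuous_const)
      (isClosed_le (Continuous.sub (G := ℝ) (cont_coord _) (cont_coord _)).abs continuous_const))

lemma closed_U1set (hN : 1 ≤ N) : IsClosed (U1set N hN a r uprev) := by
  have e : U1set N hN a r uprev =
      {u : EuclideanSpace ℝ (Fin (N+1)) | max (-a) (uprev - r) ≤ u 0} ∩
      ({u | u 0 ≤ min a (uprev + r)} ∩
        ({u | |u ⟨1, by omega⟩| ≤ a} ∩ {u | |u ⟨1, by omega⟩ - u 0| ≤ r})) := rfl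
  rw [e]
  exact IsClosed.inter (isClosed_le continuous_const (cont_coord _))
    (IsClosed.inter (isClosed_le (cont_coord _) continuous_const)
      (IsClosed.inter (isClosed_le (cont_coord _).abs continuous_const)
        (isClosed_le (Continuous.sub (G := ℝ) (cont_coord _) (cont_coord _)).abs continuous_const)))

lemma convex_evenInter : Convex ℝ (evenInter N a r) :=
  convex_iInter fun k => convex_iInter fun h => convex_pairSet k (by omega) h.2.2

lemma closed_evenInter : IsClosed (evenInter N a r) :=
  isClosed_iInter fun k => isClosed_iInter fun h => closed_pairSet k (by omega) h.2.2

lemma convex_oddInter (hN : 1 ≤ N) : Convex ℝ (oddInter N hN a r uprev) :=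
  (convex_U1set hN).inter
    (convex_iInter fun k => convex_iInter fun h => convex_pairSet k (by omega) h.2.2)

lemma closed_oddInter (hN : 1 ≤ N) : IsClosed (oddInter N hN a r uprev) :=
  (closed_U1set hN).inter
    (isClosed_iInter fun k => isClosed_iInter fun h => closed_pairSet k (by omega) h.2.2)

lemma setEq (N : ℕ) (hN : 1 ≤ N) (a r uprev : ℝ) :
    rateAmpSet N a r uprev = evenInter N a r ∩ oddInter N hN a r uprev := by
  ext u
  constructor
  · rintro ⟨hamp, hr0, hrk⟩
    have hpair : ∀ (k : ℕ) (h1 : 1 ≤ k) (h2 : k ≤ N), u ∈ pairSet N a r k h1 h2 := by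
      intro k h1 h2
      refine ⟨hamp _, hamp _, ?_⟩
      have hthis := hrk ⟨k - 1, by omega⟩
      have e1 : (⟨k - 1, by omega⟩ : Fin N).succ = (⟨k, by omega⟩ : Fin (N+1)) := by
        apply Fin.ext; simp [Fin.val_succ]; omega
      have e2 : (⟨k - 1, by omega⟩ : Fin N).castSucc = (⟨k - 1, by omega⟩ : Fin (N+1)) := by
        apply Fin.ext; simp
      rwa [e1, e2] at hthis
    refine ⟨?_, ?_, ?_⟩
    · exact Set.mem_iInter₂.mpr fun k h => hpair k (by omega) h.2.2
    · have h0' := abs_le.mp (hamp 0)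
      have hr0' := abs_le.mp hr0
      have h1 := hrk ⟨0, by omega⟩
      have e1 : (⟨0, by omega⟩ : Fin N).succ = (⟨1, by omega⟩ : Fin (N+1)) := by
        apply Fin.ext; simp
      have e2 : (⟨0, by omega⟩ : Fin N).castSucc = (0 : Fin (N+1)) := by
        apply Fin.ext; simp
      rw [e1, e2] at h1
      exact ⟨max_le (by linarith [h0'.1]) (by linarith [hr0'.2]),
        le_min (h0'.2) (by linarith [hr0'.1]), hamp _, h1⟩
    · exact Set.mem_iInter₂.mpr fun k h => hpair k (by omega) h.2.2
  · rintro ⟨he, h1, ho⟩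
    have hpair : ∀ (k : ℕ) (h1 : 2 ≤ k) (h2 : k ≤ N), u ∈ pairSet N a r k (by omega) h2 := by
      intro k hk2 hkN
      rcases Nat.even_or_odd k with hev | hod
      · exact Set.mem_iInter₂.mp he k ⟨hev, hk2, hkN⟩
      · exact Set.mem_iInter₂.mp ho k ⟨hod, hk2, hkN⟩
    obtain ⟨ha1, ha2, ha3, ha4⟩ := h1
    refine ⟨?_, ?_, ?_⟩
    · intro k
      rcases Nat.lt_or_ge k.val 2 with hk | hk
      · rcases Nat.lt_or_ge k.val 1 with hk0 | hk1
        · have e : k = 0 := by apply Fin.ext; simp only [Fin.coe_ofNat_eq_mod, Nat.zero_mod]; omega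
          rw [e]
          exact abs_le.mpr ⟨le_trans (le_max_left _ _) ha1, le_trans ha2 (min_le_left _ _)⟩
        · have e : k = (⟨1, by omega⟩ : Fin (N+1)) := by apply Fin.ext; simp; omega
          rwa [e]
      · have hkN : k.val ≤ N := by omega
        have hthis := (hpair k.val hk hkN).2.1
        have e : (⟨k.val, by omega⟩ : Fin (N+1)) = k := by apply Fin.ext; simp
        rwa [e] at hthis
    · rw [abs_sub_le_iff]
      constructor
      · linarith [le_trans ha2 (min_le_right _ _)]
      · linarith [le_trans (le_max_right _ _) ha1]
    · intro k
      rcases Nat.lt_or_ge k.val 1 with hk0 | hk1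
      · have e1 : k.succ = (⟨1, by omega⟩ : Fin (N+1)) := by
          apply Fin.ext; simp [Fin.val_succ]; omega
        have e2 : k.castSucc = (0 : Fin (N+1)) := by apply Fin.ext; simp; omega
        rw [e1, e2]; exact ha4
      · have hkk : 2 ≤ k.val + 1 := by omega
        have hkN : k.val + 1 ≤ N := by omega
        have hthis := (hpair (k.val + 1) hkk hkN).2.2
        have e1 : (⟨k.val + 1, by omega⟩ : Fin (N+1)) = k.succ := by
          apply Fin.ext; simp [Fin.val_succ]
        have e2 : (⟨k.val + 1 - 1, by omega⟩ : Fin (N+1)) = k.castSucc := by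
          apply Fin.ext; simp
        rwa [e1, e2] at hthis

end Sets
set_option maxHeartbeats 1000000 in
/-- Dykstra's algorithm applied to the splitting `U = U_e ∩ U_o` of the
input rate and amplitude constraint set converges to the Euclidean projection of `v°`
onto `U`. -/
theorem dykstra_rateAmpSet_converges
    (N : ℕ) (hN : 1 ≤ N) (a r uprev : ℝ) (ha : 0 < a) (hr : 0 < r) (hra : r ≤ 2 * a)
    (huprev : |uprev| ≤ a)
    (Pe Po : EuclideanSpace ℝ (Fin (N + 1)) → EuclideanSpace ℝ (Fin (N + 1)))
    (hPe : ∀ z, IsProj (evenInter N a r) z (Pe z))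
    (hPo : ∀ z, IsProj (oddInter N hN a r uprev) z (Po z))
    (v0 : EuclideanSpace ℝ (Fin (N + 1)))
    (x y μ γ : ℕ → EuclideanSpace ℝ (Fin (N + 1)))
    (hx0 : x 0 = v0) (hμ0 : μ 0 = 0) (hγ0 : γ 0 = 0)
    (hy : ∀ i, y i = Pe (x i + μ i))
    (hμ : ∀ i, μ (i + 1) = μ i + x i - y i)
    (hx : ∀ i, x (i + 1) = Po (y i + γ i))
    (hγ : ∀ i, γ (i + 1) = γ i + y i - x (i + 1))
    (pStar : EuclideanSpace ℝ (Fin (N + 1)))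
    (hpStar : IsProj (rateAmpSet N a r uprev) v0 pStar) :
    Tendsto x atTop (𝓝 pStar) ∧ Tendsto y atTop (𝓝 pStar) := by
  set A := evenInter N a r with hA
  set B := oddInter N hN a r uprev with hB
  have hU : rateAmpSet N a r uprev = A ∩ B := setEq N hN a r uprev
  have hconvA : Convex ℝ A := convex_evenInter
  have hconvB : Convex ℝ B := convex_oddInter hN
  have hclosA : IsClosed A := closed_evenInter
  have hclosB : IsClosed B := closed_oddInter hN
  have hconvU : Convex ℝ (rateAmpSet N a r uprev) := hU ▸ hconvA.inter hconvB
  have hwmem : pStar ∈ A ∩ B := hU ▸ hpStar.1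
  -- memberships
  have hyA : ∀ i, y i ∈ A := fun i => (hy i) ▸ (hPe _).1
  have hxB : ∀ i, x (i + 1) ∈ B := fun i => (hx i) ▸ (hPo _).1
  -- variational inequalities
  have VIμ : ∀ i, ∀ v ∈ A, ⟪μ (i + 1), v - y i⟫ ≤ 0 := by
    intro i v hv
    have e : μ (i + 1) = (x i + μ i) - y i := by rw [hμ]; abel
    rw [e, hy i]
    exact isProj_inner_le hconvA (hPe _) hv
  have VIγ : ∀ i, ∀ v ∈ B, ⟪γ (i + 1), v - x (i + 1)⟫ ≤ 0 := by
    intro i v hv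
    have e : γ (i + 1) = (y i + γ i) - x (i + 1) := by rw [hγ]; abel
    rw [e, hx i]
    exact isProj_inner_le hconvB (hPo _) hv
  -- the correction identities
  have hμ1 : μ 1 = x 0 - y 0 := by rw [hμ 0, hμ0]; abel
  have hγ1 : γ 1 = y 0 - x 1 := by rw [hγ 0, hγ0]; abel
  have hcorr : ∀ i, μ (i + 1) + γ (i + 1) = x 0 - x (i + 1) := by
    intro i
    induction i with
    | zero => rw [hμ1, hγ1]; abel
    | succ n ih => rw [hμ (n + 1), hγ (n + 1)]; rw [show μ (n+1) + x (n+1) - y (n+1) +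
        (γ (n+1) + y (n+1) - x (n+2)) = (μ (n+1) + γ (n+1)) + x (n+1) - x (n+2) by abel, ih]; abel
  -- quantities
  set w := pStar with hwdef
  set S : ℝ := ‖x 0 - w‖ ^ 2 with hS
  set sq : ℕ → ℝ := fun i => ‖x i - y i‖ ^ 2 + ‖y i - x (i + 1)‖ ^ 2 with hsq
  set cr : ℕ → ℝ := fun i => ⟪μ (i + 1), y i - y (i + 1)⟫ + ⟪γ (i + 1), x (i + 1) - x (i + 2)⟫
    with hcr
  set Φ : ℕ → ℝ := fun i => ‖x (i + 1) - w‖ ^ 2 + 2 * ⟪μ (i + 1), y i - w⟫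
    + 2 * ⟪γ (i + 1), x (i + 1) - w⟫ with hΦ
  have hsq0 : ∀ i, 0 ≤ sq i := fun i => add_nonneg (sq_nonneg _) (sq_nonneg _)
  have hinner_flip : ∀ (p q s : EuclideanSpace ℝ (Fin (N+1))), ⟪p, q - s⟫ = -⟪p, s - q⟫ := by
    intro p q s
    rw [show q - s = -(s - q) by abel, inner_neg_right]
  have hcr0 : ∀ i, 0 ≤ cr i := by
    intro i
    have h1 := VIμ i (y (i + 1)) (hyA (i + 1))
    have h2 := VIγ i (x (i + 2)) (hxB (i + 1))
    simp only [hcr]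
    rw [hinner_flip (μ (i+1)), hinner_flip (γ (i+1))]
    linarith
  have hΦ_ge : ∀ i, ‖x (i + 1) - w‖ ^ 2 ≤ Φ i := by
    intro i
    have h1 := VIμ i w hwmem.1
    have h2 := VIγ i w hwmem.2
    simp only [hΦ]
    rw [hinner_flip (μ (i+1)), hinner_flip (γ (i+1))]
    linarith
  have hΦ_nonneg : ∀ i, 0 ≤ Φ i := fun i => le_trans (sq_nonneg _) (hΦ_ge i)
  -- master identity
  have master : ∀ i, S = Φ i + (∑ j ∈ Finset.range (i + 1), sq j)
      + 2 * ∑ j ∈ Finset.range i, cr j := by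
    intro i
    induction i with
    | zero =>
      simp only [zero_add, Finset.range_one, Finset.sum_singleton, Finset.range_zero,
        Finset.sum_empty, mul_zero, add_zero]
      have hbase := algBase (x 0) (y 0) (x 1) w
      simp only [hΦ, hsq, hS, zero_add]
      rw [hμ1, hγ1]
      linarith [hbase]
    | succ n ih =>
      rw [Finset.sum_range_succ (f := sq), Finset.sum_range_succ (f := cr)]
      have hstep := algStep (x (n + 1)) (y (n + 1)) (x (n + 2)) (y n)
        (μ (n + 1)) (γ (n + 1)) w
      rw [← hμ (n + 1), ← hγ (n + 1)] at hstep
      simp only [hΦ, hsq, hcr] at ih ⊢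
      linarith [hstep, ih]
  have hΦ_succ_le : ∀ i, Φ (i + 1) ≤ Φ i := by
    intro i
    have h1 := master i
    have h2 := master (i + 1)
    rw [Finset.sum_range_succ (f := sq), Finset.sum_range_succ (f := cr)] at h2
    linarith [hsq0 (i + 1 + 1 - 1), hcr0 i, hsq0 (i + 1), hΦ_nonneg i]
  have hΦ_anti : Antitone Φ := antitone_nat_of_succ_le hΦ_succ_le
  have key : ∀ i m, i ≤ m → ‖x (m + 1) - w‖ ^ 2 ≤ Φ i :=
    fun i m him => le_trans (hΦ_ge m) (hΦ_anti him)
  -- summability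
  have hS0 : 0 ≤ S := sq_nonneg _
  have hsq_psum : ∀ i, ∑ j ∈ Finset.range i, sq j ≤ S := by
    intro i
    cases i with
    | zero => simpa using hS0
    | succ n =>
      have h1 := master n
      have h2 : 0 ≤ ∑ j ∈ Finset.range n, cr j := Finset.sum_nonneg fun j _ => hcr0 j
      linarith [hΦ_nonneg n]
  have hsq_summable : Summable sq := summable_of_sum_range_le hsq0 hsq_psum
  have hsq_tendsto : Tendsto sq atTop (𝓝 0) := hsq_summable.tendsto_atTop_zero
  have hsqrt_sq_tendsto : Tendsto (fun i => Real.sqrt (sq i)) atTop (𝓝 0) := by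
    have := hsq_tendsto.sqrt
    simpa using this
  have hxy_norm_tendsto : Tendsto (fun i => ‖x i - y i‖) atTop (𝓝 0) := by
    apply squeeze_zero (fun i => norm_nonneg _)
      (g := fun i => Real.sqrt (sq i)) (fun i => ?_) hsqrt_sq_tendsto
    rw [Real.le_sqrt (norm_nonneg _) (hsq0 i)]
    simp only [hsq]
    exact le_add_of_nonneg_right (sq_nonneg _)
  have hxy_tendsto : Tendsto (fun i => x i - y i) atTop (𝓝 0) := by
    rw [tendsto_zero_iff_norm_tendsto_zero]
    exact hxy_norm_tendsto
  have hyx_norm_tendsto : Tendsto (fun i => ‖y i - x (i + 1)‖) atTop (𝓝 0) := by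
    apply squeeze_zero (fun i => norm_nonneg _)
      (g := fun i => Real.sqrt (sq i)) (fun i => ?_) hsqrt_sq_tendsto
    rw [Real.le_sqrt (norm_nonneg _) (hsq0 i)]
    simp only [hsq]
    exact le_add_of_nonneg_left (sq_nonneg _)
  -- b summable
  set b : ℕ → ℝ := fun i => ‖y i - x (i + 1)‖ ^ 2 with hb
  have hb0 : ∀ i, 0 ≤ b i := fun i => sq_nonneg _
  have hb_summable : Summable b := by
    apply Summable.of_nonneg_of_le hb0 (fun i => ?_) hsq_summable
    simp only [hb, hsq]
    exact le_add_of_nonneg_left (sq_nonneg _)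
  -- μ norm bound
  have hμnorm1 : ∀ i, ‖μ i‖ ≤ ∑ j ∈ Finset.range i, ‖x j - y j‖ := by
    intro i
    induction i with
    | zero => simp [hμ0]
    | succ n ih =>
      rw [hμ n, Finset.sum_range_succ]
      calc ‖μ n + x n - y n‖ = ‖μ n + (x n - y n)‖ := by rw [add_sub_assoc]
        _ ≤ ‖μ n‖ + ‖x n - y n‖ := norm_add_le _ _
        _ ≤ _ := by linarith
  have hμnorm : ∀ i, ‖μ (i + 1)‖ ^ 2 ≤ ((i : ℝ) + 1) * S := by
    intro i
    have h1 := hμnorm1 (i + 1)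
    have h2 : (∑ j ∈ Finset.range (i + 1), ‖x j - y j‖) ^ 2
        ≤ ((i : ℝ) + 1) * ∑ j ∈ Finset.range (i + 1), ‖x j - y j‖ ^ 2 := by
      have := Finset.sum_mul_sq_le_sq_mul_sq (Finset.range (i + 1))
        (fun _ => (1 : ℝ)) (fun j => ‖x j - y j‖)
      simpa using this
    have h3 : ∑ j ∈ Finset.range (i + 1), ‖x j - y j‖ ^ 2 ≤ S := by
      refine le_trans (Finset.sum_le_sum fun j _ => ?_) (hsq_psum (i + 1))
      simp only [hsq]
      exact le_add_of_nonneg_right (sq_nonneg _)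
    have h4 : ‖μ (i + 1)‖ ^ 2 ≤ (∑ j ∈ Finset.range (i + 1), ‖x j - y j‖) ^ 2 := by
      apply pow_le_pow_left₀ (norm_nonneg _) h1
    calc ‖μ (i + 1)‖ ^ 2 ≤ (∑ j ∈ Finset.range (i + 1), ‖x j - y j‖) ^ 2 := h4
      _ ≤ ((i : ℝ) + 1) * ∑ j ∈ Finset.range (i + 1), ‖x j - y j‖ ^ 2 := h2
      _ ≤ ((i : ℝ) + 1) * S := by
          apply mul_le_mul_of_nonneg_left h3 (by positivity)
  -- subsequence extraction
  obtain ⟨φ, hφmono, hφlim⟩ := exists_subseq_mul_tendsto hb0 hb_summable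
  have hxball : ∀ i, x (i + 1) ∈ Metric.closedBall w (Real.sqrt S) := by
    intro i
    rw [Metric.mem_closedBall, dist_eq_norm]
    have h1 : ‖x (i + 1) - w‖ ^ 2 ≤ S := by
      have := key 0 i (Nat.zero_le _)
      have h2 : Φ 0 ≤ S := by
        have hm := master 0
        simp only [zero_add, Finset.range_one, Finset.sum_singleton, Finset.range_zero,
          Finset.sum_empty, mul_zero, add_zero] at hm
        linarith [hsq0 0]
      linarith
    rw [show Real.sqrt S = Real.sqrt S from rfl]
    have := Real.sqrt_le_sqrt h1
    rwa [Real.sqrt_sq (norm_nonneg _)] at this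
  obtain ⟨xs, _, ψ, hψmono, hψlim⟩ := tendsto_subseq_of_bounded
    (Metric.isBounded_closedBall (x := w) (r := Real.sqrt S))
    (fun j => hxball (φ j))
  set χ : ℕ → ℕ := fun j => φ (ψ j) with hχ
  have hχtendsto : Tendsto χ atTop atTop := (hφmono.tendsto_atTop).comp hψmono.tendsto_atTop
  have hxχ : Tendsto (fun j => x (χ j + 1)) atTop (𝓝 xs) := hψlim
  -- xs in A ∩ B
  have hxsB : xs ∈ B := by
    apply hclosB.mem_of_tendsto hxχ
    exact Eventually.of_forall fun j => hxB (χ j)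
  have hyχ : Tendsto (fun j => y (χ j)) atTop (𝓝 xs) := by
    have hdiff : Tendsto (fun j => y (χ j) - x (χ j + 1)) atTop (𝓝 0) := by
      rw [tendsto_zero_iff_norm_tendsto_zero]
      exact hyx_norm_tendsto.comp hχtendsto
    have := hdiff.add hxχ
    simpa using this
  have hxsA : xs ∈ A := by
    apply hclosA.mem_of_tendsto hyχ
    exact Eventually.of_forall fun j => hyA (χ j)
  have hxsU : xs ∈ rateAmpSet N a r uprev := hU ▸ ⟨hxsA, hxsB⟩
  -- VI at pStar
  have hVI : ⟪x 0 - w, xs - w⟫ ≤ 0 := by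
    rw [hx0]
    exact isProj_inner_le hconvU hpStar hxsU
  -- rewrite Φ
  have hΦ_rw : ∀ i, Φ i = ‖x (i + 1) - w‖ ^ 2 + 2 * ⟪μ (i + 1), y i - x (i + 1)⟫
      + 2 * ⟪x 0 - x (i + 1), x (i + 1) - w⟫ := by
    intro i
    simp only [hΦ]
    rw [← hcorr i]
    have e1 : y i - w = (y i - x (i + 1)) + (x (i + 1) - w) := by abel
    rw [e1, inner_add_right, inner_add_left]
    ring
  -- upper bound function
  set g : ℕ → ℝ := fun j => ‖x (χ j + 1) - w‖ ^ 2
      + 2 * (‖μ (χ j + 1)‖ * ‖y (χ j) - x (χ j + 1)‖)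
      + 2 * ⟪x 0 - x (χ j + 1), x (χ j + 1) - w⟫ with hg
  have hΦ_le_g : ∀ j, Φ (χ j) ≤ g j := by
    intro j
    rw [hΦ_rw (χ j)]
    simp only [hg]
    have := real_inner_le_norm (μ (χ j + 1)) (y (χ j) - x (χ j + 1))
    linarith
  -- g tends to limit ≤ 0
  have hmid : Tendsto (fun j => ‖μ (χ j + 1)‖ * ‖y (χ j) - x (χ j + 1)‖) atTop (𝓝 0) := by
    have hq : Tendsto (fun j => ((χ j : ℝ) + 1) * b (χ j)) atTop (𝓝 0) := by
      have : (fun j => ((χ j : ℝ) + 1) * b (χ j))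
          = (fun i => ((φ i : ℝ) + 1) * b (φ i)) ∘ ψ := rfl
      rw [this]
      exact hφlim.comp hψmono.tendsto_atTop
    apply squeeze_zero (fun j => mul_nonneg (norm_nonneg _) (norm_nonneg _))
      (g := fun j => Real.sqrt (S * (((χ j : ℝ) + 1) * b (χ j))))
      ?_ ?_
    case _ =>
      intro j
      rw [Real.le_sqrt (mul_nonneg (norm_nonneg _) (norm_nonneg _))
        (mul_nonneg hS0 (mul_nonneg (by positivity) (hb0 _)))]
      have h1 := hμnorm (χ j)
      have h2 : ‖y (χ j) - x (χ j + 1)‖ ^ 2 = b (χ j) := rfl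
      have h3 : 0 ≤ b (χ j) := hb0 _
      calc (‖μ (χ j + 1)‖ * ‖y (χ j) - x (χ j + 1)‖) ^ 2
          = ‖μ (χ j + 1)‖ ^ 2 * ‖y (χ j) - x (χ j + 1)‖ ^ 2 := by ring
        _ ≤ (((χ j : ℝ) + 1) * S) * b (χ j) := by
            rw [h2]; exact mul_le_mul_of_nonneg_right h1 h3
        _ = S * (((χ j : ℝ) + 1) * b (χ j)) := by ring
    case _ =>
      have : Tendsto (fun j => S * (((χ j : ℝ) + 1) * b (χ j))) atTop (𝓝 0) := by
        simpa using hq.const_mul S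
      have := this.sqrt
      simpa using this
  have hg_tendsto : Tendsto g atTop
      (𝓝 (‖xs - w‖ ^ 2 + 2 * 0 + 2 * ⟪x 0 - xs, xs - w⟫)) := by
    rw [hg]
    apply Tendsto.add
    apply Tendsto.add
    · have : Tendsto (fun j => x (χ j + 1) - w) atTop (𝓝 (xs - w)) :=
        hxχ.sub tendsto_const_nhds
      exact (this.norm.pow 2)
    · exact hmid.const_mul 2
    · exact ((tendsto_const_nhds.sub hxχ).inner (hxχ.sub tendsto_const_nhds)).const_mul 2
  have hlim_le : ‖xs - w‖ ^ 2 + 2 * 0 + 2 * ⟪x 0 - xs, xs - w⟫ ≤ 0 := by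
    have e : ⟪x 0 - xs, xs - w⟫ = ⟪x 0 - w, xs - w⟫ - ⟪xs - w, xs - w⟫ := by
      rw [show x 0 - xs = (x 0 - w) - (xs - w) by abel, inner_sub_left]
    rw [e, real_inner_self_eq_norm_sq]
    linarith [sq_nonneg ‖xs - w‖]
  -- final convergence of x
  have hxlim : Tendsto x atTop (𝓝 w) := by
    rw [Metric.tendsto_atTop]
    intro ε hε
    have hev : ∀ᶠ j in atTop, g j < ε ^ 2 :=
      hg_tendsto.eventually_lt_const (lt_of_le_of_lt hlim_le (by positivity))
    obtain ⟨j, hj⟩ := hev.exists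
    refine ⟨χ j + 1, fun m hm => ?_⟩
    obtain ⟨k, rfl⟩ : ∃ k, m = k + 1 := ⟨m - 1, by omega⟩
    have h1 : ‖x (k + 1) - w‖ ^ 2 ≤ Φ (χ j) := key (χ j) k (by omega)
    have h2 : ‖x (k + 1) - w‖ ^ 2 < ε ^ 2 := lt_of_le_of_lt (le_trans h1 (hΦ_le_g j)) hj
    rw [dist_eq_norm]
    nlinarith [norm_nonneg (x (k + 1) - w)]
  refine ⟨hxlim, ?_⟩
  have : Tendsto (fun i => x i - (x i - y i)) atTop (𝓝 (w - 0)) := hxlim.sub hxy_tendsto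
  simp only [sub_sub_cancel, sub_zero] at this
  exact this
end

section
/- Let C and D be nonempty closed convex subsets of ℝⁿ with C ∩ D ≠ ∅, and let x_0 ∈ ℝⁿ. Define the alternating projection iterates x_{2i+1} = P_C(x_{2i}) and x_{2i+2} = P_D(x_{2i+1}) for i ≥ 0. Then the sequence (x_i) converges to some point belonging to C ∩ D. -/
open Filter Topology

lemma proj_key {n : ℕ} {C : Set (EuclideanSpace ℝ (Fin n))} (hC : Convex ℝ C)
    {z p q : EuclideanSpace ℝ (Fin n)} (hp : IsProj C z p) (hq : q ∈ C) :
    ‖p - q‖ ^ 2 + ‖z - p‖ ^ 2 ≤ ‖z - q‖ ^ 2 := by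
  have hinf : ‖z - p‖ = ⨅ w : C, ‖z - w‖ := by
    have : Nonempty C := ⟨⟨p, hp.1⟩⟩
    refine le_antisymm (le_ciInf fun w => ?_) ?_
    · have := hp.2 w w.2
      simpa [dist_eq_norm] using this
    · exact ciInf_le ⟨0, by rintro _ ⟨w, rfl⟩; positivity⟩ (⟨p, hp.1⟩ : C)
  have hineq : ∀ w ∈ C, (inner ℝ (z - p) (w - p) : ℝ) ≤ 0 :=
    (norm_eq_iInf_iff_real_inner_le_zero hC hp.1).mp hinf
  have h1 : (inner ℝ (z - p) (q - p) : ℝ) ≤ 0 := hineq q hq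
  have hexp : ‖z - q‖ ^ 2 = ‖z - p‖ ^ 2 - 2 * (inner ℝ (z - p) (q - p) : ℝ) + ‖q - p‖ ^ 2 := by
    have := @norm_sub_sq_real (EuclideanSpace ℝ (Fin n)) _ _ (z - p) (q - p)
    simpa [sub_sub_sub_cancel_right] using this
  rw [hexp, norm_sub_rev q p]
  linarith

set_option maxHeartbeats 1000000 in
/-- the alternating projections method for two nonempty closed convex sets
`C, D ⊆ ℝⁿ` with nonempty intersection converges to some point of `C ∩ D`. -/
theorem alternating_projections_converge
    (n : ℕ) (C D : Set (EuclideanSpace ℝ (Fin n)))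
    (hCne : C.Nonempty) (hCcl : IsClosed C) (hCconv : Convex ℝ C)
    (hDne : D.Nonempty) (hDcl : IsClosed D) (hDconv : Convex ℝ D)
    (hinter : (C ∩ D).Nonempty)
    (PC PD : EuclideanSpace ℝ (Fin n) → EuclideanSpace ℝ (Fin n))
    (hPC : ∀ z, IsProj C z (PC z)) (hPD : ∀ z, IsProj D z (PD z))
    (x : ℕ → EuclideanSpace ℝ (Fin n))
    (hodd : ∀ i, x (2 * i + 1) = PC (x (2 * i)))
    (heven : ∀ i, x (2 * i + 2) = PD (x (2 * i + 1))) :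
    ∃ p ∈ C ∩ D, Tendsto x atTop (𝓝 p) := by
  obtain ⟨q0, hq0C, hq0D⟩ := hinter
  -- membership of iterates
  have hxC : ∀ m, Odd m → x m ∈ C := by
    rintro m ⟨j, rfl⟩
    rw [hodd]
    exact (hPC _).1
  have hxD : ∀ m, Even m → m ≠ 0 → x m ∈ D := by
    rintro m ⟨j, rfl⟩ hm
    obtain ⟨k, rfl⟩ : ∃ k, j = k + 1 := ⟨j - 1, by omega⟩
    rw [show (k + 1) + (k + 1) = 2 * k + 2 from by ring, heven]
    exact (hPD _).1
  -- the fundamental Fejér step inequality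
  have hstep : ∀ q ∈ C ∩ D, ∀ i,
      ‖x (i + 1) - q‖ ^ 2 + ‖x i - x (i + 1)‖ ^ 2 ≤ ‖x i - q‖ ^ 2 := by
    rintro q ⟨hqC, hqD⟩ i
    rcases Nat.even_or_odd i with ⟨j, rfl⟩ | ⟨j, rfl⟩
    · rw [show j + j + 1 = 2 * j + 1 from by ring, hodd, show j + j = 2 * j from by ring]
      exact proj_key hCconv (hPC _) hqC
    · rw [show 2 * j + 1 + 1 = 2 * j + 2 from rfl, heven]
      exact proj_key hDconv (hPD _) hqD
  have hanti : ∀ q ∈ C ∩ D, Antitone fun i => ‖x i - q‖ := by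
    intro q hq
    apply antitone_nat_of_succ_le
    intro i
    have h := hstep q hq i
    have h2 : ‖x (i + 1) - q‖ ^ 2 ≤ ‖x i - q‖ ^ 2 := by nlinarith [sq_nonneg ‖x i - x (i + 1)‖]
    nlinarith [norm_nonneg (x (i + 1) - q), norm_nonneg (x i - q)]
  -- square-summability of the gaps
  set g : ℕ → ℝ := fun i => ‖x i - x (i + 1)‖ with hgdef
  have hsum : ∀ N, ∑ i ∈ Finset.range N, g i ^ 2 ≤ ‖x 0 - q0‖ ^ 2 := by
    have key : ∀ N, ∑ i ∈ Finset.range N, g i ^ 2 + ‖x N - q0‖ ^ 2 ≤ ‖x 0 - q0‖ ^ 2 := by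
      intro N
      induction N with
      | zero => simp
      | succ N ih =>
        rw [Finset.sum_range_succ]
        have := hstep q0 ⟨hq0C, hq0D⟩ N
        simp only [hgdef]
        linarith
    intro N
    have := key N
    nlinarith [sq_nonneg ‖x N - q0‖]
  have hgsum : Summable fun i => g i ^ 2 :=
    summable_of_sum_range_le (fun i => sq_nonneg _) hsum
  have hg2 : Tendsto (fun i => g i ^ 2) atTop (𝓝 0) := hgsum.tendsto_atTop_zero
  have hg : Tendsto g atTop (𝓝 0) := by
    have h := (Real.continuous_sqrt.tendsto 0).comp hg2
    simp only [Real.sqrt_zero] at h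
    have he : (Real.sqrt ∘ fun i => g i ^ 2) = g := by
      funext i
      simp [hgdef, Real.sqrt_sq (norm_nonneg _)]
    rwa [he] at h
  -- Bolzano–Weierstrass: a convergent subsequence
  have hb : ∀ i, x i ∈ Metric.closedBall q0 ‖x 0 - q0‖ := by
    intro i
    simp only [Metric.mem_closedBall, dist_eq_norm]
    exact hanti q0 ⟨hq0C, hq0D⟩ (Nat.zero_le i)
  obtain ⟨p, -, φ, hφ, hxφ⟩ := tendsto_subseq_of_bounded Metric.isBounded_closedBall hb
  have hφtop : Tendsto φ atTop atTop := hφ.tendsto_atTop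
  have hgφ : Tendsto (fun k => g (φ k)) atTop (𝓝 0) := hg.comp hφtop
  have hgφ1 : Tendsto (fun k => g (φ k + 1)) atTop (𝓝 0) :=
    hg.comp (tendsto_atTop_mono (fun k => Nat.le_add_right (φ k) 1) hφtop)
  have hdxp : Tendsto (fun k => dist (x (φ k)) p) atTop (𝓝 0) :=
    tendsto_iff_dist_tendsto_zero.mp hxφ
  -- the cluster point lies in C
  have hpC : p ∈ C := by
    set u : ℕ → EuclideanSpace ℝ (Fin n) :=
      fun k => x (if Even (φ k) then φ k + 1 else φ k) with hu
    have huC : ∀ k, u k ∈ C := by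
      intro k
      simp only [hu]
      split_ifs with h
      · exact hxC _ h.add_one
      · exact hxC _ (Nat.not_even_iff_odd.mp h)
    have hud : ∀ k, dist (u k) (x (φ k)) ≤ g (φ k) := by
      intro k
      simp only [hu, hgdef]
      split_ifs with h
      · rw [dist_comm, dist_eq_norm]
      · simp
    have hu_tendsto : Tendsto u atTop (𝓝 p) := by
      rw [tendsto_iff_dist_tendsto_zero]
      refine squeeze_zero (g := fun k => g (φ k) + dist (x (φ k)) p) (fun k => dist_nonneg)
        (fun k => (dist_triangle (u k) (x (φ k)) p).trans (by linarith [hud k])) ?_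
      simpa using hgφ.add hdxp
    exact hCcl.mem_of_tendsto hu_tendsto (Eventually.of_forall huC)
  -- the cluster point lies in D
  have hpD : p ∈ D := by
    set v : ℕ → EuclideanSpace ℝ (Fin n) :=
      fun k => x (if Even (φ k) then φ k + 2 else φ k + 1) with hv
    have hvD : ∀ k, v k ∈ D := by
      intro k
      simp only [hv]
      split_ifs with h
      · exact hxD _ (h.add even_two) (by omega)
      · exact hxD _ ((Nat.not_even_iff_odd.mp h).add_one) (by omega)
    have hvd : ∀ k, dist (v k) (x (φ k)) ≤ g (φ k) + g (φ k + 1) := by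
      intro k
      simp only [hv, hgdef]
      split_ifs with h
      · calc dist (x (φ k + 2)) (x (φ k)) ≤
            dist (x (φ k + 2)) (x (φ k + 1)) + dist (x (φ k + 1)) (x (φ k)) :=
              dist_triangle _ _ _
          _ = ‖x (φ k) - x (φ k + 1)‖ + ‖x (φ k + 1) - x (φ k + 1 + 1)‖ := by
              rw [dist_comm, dist_eq_norm, dist_comm, dist_eq_norm]
              ring_nf
          _ = _ := by ring
      · rw [dist_comm, dist_eq_norm]
        have : (0:ℝ) ≤ ‖x (φ k + 1) - x (φ k + 1 + 1)‖ := norm_nonneg _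
        linarith
    have hv_tendsto : Tendsto v atTop (𝓝 p) := by
      rw [tendsto_iff_dist_tendsto_zero]
      refine squeeze_zero (g := fun k => g (φ k) + g (φ k + 1) + dist (x (φ k)) p)
        (fun k => dist_nonneg)
        (fun k => (dist_triangle (v k) (x (φ k)) p).trans (by linarith [hvd k])) ?_
      simpa using (hgφ.add hgφ1).add hdxp
    exact hDcl.mem_of_tendsto hv_tendsto (Eventually.of_forall hvD)
  -- Fejér monotonicity upgrades subsequential convergence to convergence
  refine ⟨p, ⟨hpC, hpD⟩, ?_⟩
  have hA : Antitone fun i => ‖x i - p‖ := hanti p ⟨hpC, hpD⟩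
  have hbdd : BddBelow (Set.range fun i => ‖x i - p‖) := ⟨0, by rintro _ ⟨i, rfl⟩; positivity⟩
  have hlim := tendsto_atTop_ciInf hA hbdd
  have hsub : Tendsto (fun k => ‖x (φ k) - p‖) atTop (𝓝 (⨅ i, ‖x i - p‖)) := hlim.comp hφtop
  have hsub0 : Tendsto (fun k => ‖x (φ k) - p‖) atTop (𝓝 0) := by
    simpa [dist_eq_norm] using hdxp
  have hinf0 : (⨅ i, ‖x i - p‖) = 0 := tendsto_nhds_unique hsub hsub0
  rw [tendsto_iff_dist_tendsto_zero]
  simpa [dist_eq_norm, hinf0] using hlim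
end

section
/- Let U ⊆ ℝⁿ be a nonempty closed convex set, J ∈ ℝⁿˣⁿ a symmetric matrix and q ∈ ℝⁿ, and suppose there are constants 0 < λ_min ≤ λ_max with λ_min‖v‖² ≤ vᵀJv ≤ λ_max‖v‖² for all v ∈ ℝⁿ. Let f(u) = ½uᵀJu + qᵀu and let u* be the unique minimizer of f over U. Set β = (√λ_max − √λ_min)/(√λ_max + √λ_min). Define the fast gradient method iterates by choosing u_1 = y_1 ∈ U and, for i ≥ 1, u_{i+1} = P_U(y_i − (J y_i + q)/λ_max) and y_{i+1} = (1+β)u_{i+1} − β u_i. Then for all i ≥ 1, f(u_i) − f(u*) ≤ (1 − √(λ_min/λ_max))^{i−1} · ( f(u_1) − f(u*) + (λ_min/2)‖u_1 − u*‖² ). -/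
open Matrix
open scoped RealInnerProductSpace
set_option maxHeartbeats 1000000

private lemma fgm_dot_symm {n : ℕ} (J : Matrix (Fin n) (Fin n) ℝ) (hJ : J.IsSymm)
    (a b : Fin n → ℝ) : a ⬝ᵥ J.mulVec b = b ⬝ᵥ J.mulVec a := by
  rw [Matrix.dotProduct_mulVec, ← Matrix.mulVec_transpose, hJ.eq, dotProduct_comm]

private lemma fgm_taylor {n : ℕ} (J : Matrix (Fin n) (Fin n) ℝ) (hJ : J.IsSymm) (q : Fin n → ℝ)
    (f : EuclideanSpace ℝ (Fin n) → ℝ)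
    (hf : ∀ u, f u = (1 / 2) * (u ⬝ᵥ J.mulVec u) + q ⬝ᵥ u)
    (u w : EuclideanSpace ℝ (Fin n)) :
    f u = f w + ⟪(WithLp.equiv 2 (Fin n → ℝ)).symm (J.mulVec w + q), u - w⟫
      + (1 / 2) * ((u - w) ⬝ᵥ J.mulVec (u - w)) := by
  have key : ∀ a b : Fin n → ℝ,
      (1 / 2) * (a ⬝ᵥ J.mulVec a) + q ⬝ᵥ a
        = ((1 / 2) * (b ⬝ᵥ J.mulVec b) + q ⬝ᵥ b) + (J.mulVec b + q) ⬝ᵥ (a - b)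
          + (1 / 2) * ((a - b) ⬝ᵥ J.mulVec (a - b)) := by
    intro a b
    have hs := fgm_dot_symm J hJ a b
    have h1 : J.mulVec b ⬝ᵥ a = a ⬝ᵥ J.mulVec b := dotProduct_comm _ _
    have h2 : J.mulVec b ⬝ᵥ b = b ⬝ᵥ J.mulVec b := dotProduct_comm _ _
    simp only [Matrix.mulVec_sub, dotProduct_sub, sub_dotProduct,
      add_dotProduct, dotProduct_add, h1, h2]
    linear_combination (-1/2 : ℝ) * hs
  rw [hf u, hf w]
  rw [key u w, EuclideanSpace.inner_eq_star_dotProduct, WithLp.ofLp_sub]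
  simp [dotProduct_comm]

private lemma fgm_proj_vi {n : ℕ} {U : Set (EuclideanSpace ℝ (Fin n))} (hUconv : Convex ℝ U)
    {z p : EuclideanSpace ℝ (Fin n)}
    (hp : p ∈ U ∧ ∀ w ∈ U, dist z p ≤ dist z w) :
    ∀ w ∈ U, ⟪z - p, w - p⟫ ≤ 0 := by
  have hmem := hp.1
  haveI : Nonempty U := ⟨⟨p, hmem⟩⟩
  have hbdd : BddBelow (Set.range fun w : U => ‖z - (w : EuclideanSpace ℝ (Fin n))‖) := by
    refine ⟨0, ?_⟩
    rintro x ⟨w, rfl⟩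
    exact norm_nonneg _
  have hinf : ‖z - p‖ = ⨅ w : U, ‖z - w‖ := by
    apply le_antisymm
    · refine le_ciInf fun w => ?_
      simpa [dist_eq_norm] using hp.2 w w.2
    · exact ciInf_le hbdd ⟨p, hmem⟩
  exact (norm_eq_iInf_iff_real_inner_le_zero hUconv hmem).1 hinf

private lemma fgm_key_step {n : ℕ} {U : Set (EuclideanSpace ℝ (Fin n))} (hUconv : Convex ℝ U)
    (J : Matrix (Fin n) (Fin n) ℝ) (hJ : J.IsSymm) (q : Fin n → ℝ)
    {lmin lmax : ℝ} (hl0 : 0 < lmin) (hll : lmin ≤ lmax)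
    (hcurv : ∀ v : EuclideanSpace ℝ (Fin n),
      lmin * ‖v‖ ^ 2 ≤ v ⬝ᵥ J.mulVec v ∧ v ⬝ᵥ J.mulVec v ≤ lmax * ‖v‖ ^ 2)
    (f : EuclideanSpace ℝ (Fin n) → ℝ)
    (hf : ∀ u, f u = (1 / 2) * (u ⬝ᵥ J.mulVec u) + q ⬝ᵥ u)
    (yy up : EuclideanSpace ℝ (Fin n))
    (hproj : up ∈ U ∧ ∀ w ∈ U,
      dist (yy - lmax⁻¹ • (WithLp.equiv 2 (Fin n → ℝ)).symm (J.mulVec yy + q)) up ≤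
      dist (yy - lmax⁻¹ • (WithLp.equiv 2 (Fin n → ℝ)).symm (J.mulVec yy + q)) w)
    (w : EuclideanSpace ℝ (Fin n)) (hw : w ∈ U) :
    f up + (1 / (2 * lmax)) * ‖lmax • (yy - up)‖ ^ 2 + (lmin / 2) * ‖w - yy‖ ^ 2
      + ⟪lmax • (yy - up), w - yy⟫ ≤ f w := by
  have hlmax : (0:ℝ) < lmax := lt_of_lt_of_le hl0 hll
  set g : EuclideanSpace ℝ (Fin n) := (WithLp.equiv 2 (Fin n → ℝ)).symm (J.mulVec yy + q) with hg
  have h1 : f up ≤ f yy + ⟪g, up - yy⟫ + (lmax / 2) * ‖up - yy‖ ^ 2 := by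
    have ht := fgm_taylor J hJ q f hf up yy
    have hc := (hcurv (up - yy)).2
    rw [← hg, WithLp.ofLp_sub] at ht
    rw [WithLp.ofLp_sub] at hc
    rw [ht]; linarith
  have h2 : f yy + ⟪g, w - yy⟫ + (lmin / 2) * ‖w - yy‖ ^ 2 ≤ f w := by
    have ht := fgm_taylor J hJ q f hf w yy
    have hc := (hcurv (w - yy)).1
    rw [← hg, WithLp.ofLp_sub] at ht
    rw [WithLp.ofLp_sub] at hc
    rw [ht]; linarith
  have hVI : ⟪(yy - lmax⁻¹ • g) - up, w - up⟫ ≤ 0 := fgm_proj_vi hUconv hproj w hw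
  have hVI' : ⟪yy - up, w - up⟫ - lmax⁻¹ * ⟪g, w - up⟫ ≤ 0 := by
    have he : ((yy - lmax⁻¹ • g) - up : EuclideanSpace ℝ (Fin n))
        = (yy - up) - lmax⁻¹ • g := by abel
    rw [he, inner_sub_left, real_inner_smul_left] at hVI
    linarith
  have h3 : lmax * ⟪yy - up, w - up⟫ ≤ ⟪g, w - up⟫ := by
    have := mul_le_mul_of_nonneg_left hVI' (le_of_lt hlmax)
    rw [mul_sub, ← mul_assoc, mul_inv_cancel₀ (ne_of_gt hlmax)] at this
    linarith
  have e1 : ⟪g, up - yy⟫ = ⟪g, w - yy⟫ + ⟪g, up - w⟫ := by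
    rw [← inner_add_right]; congr 1; abel
  have e2 : ⟪g, up - w⟫ = -⟪g, w - up⟫ := by
    rw [← inner_neg_right]; congr 1; abel
  have e3 : ⟪yy - up, w - up⟫ = ⟪yy - up, w - yy⟫ + ‖yy - up‖ ^ 2 := by
    rw [← real_inner_self_eq_norm_sq, ← inner_add_right]; congr 1; abel
  have e4 : ⟪lmax • (yy - up), w - yy⟫ = lmax * ⟪yy - up, w - yy⟫ :=
    real_inner_smul_left _ _ _
  have e5 : ‖lmax • (yy - up)‖ ^ 2 = lmax ^ 2 * ‖yy - up‖ ^ 2 := by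
    rw [norm_smul, Real.norm_eq_abs, abs_of_pos hlmax, mul_pow]
  have e6 : ‖up - yy‖ = ‖yy - up‖ := norm_sub_rev _ _
  have e7 : (1 / (2 * lmax)) * (lmax ^ 2 * ‖yy - up‖ ^ 2) = (lmax / 2) * ‖yy - up‖ ^ 2 := by
    field_simp
  rw [e4, e5, e7]
  rw [e6] at h1
  nlinarith [h1, h2, h3, e1, e2, e3]

/-- convergence rate of Nesterov's constant step scheme II (fast gradient
method) with projection for the strongly convex quadratic `f(u) = ½uᵀJu + qᵀu` over a
nonempty closed convex set `U ⊆ ℝⁿ`: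
`f(u_i) − f(u*) ≤ (1 − √(λ_min/λ_max))^{i−1} (f(u_1) − f(u*) + (λ_min/2)‖u_1 − u*‖²)`. -/
theorem fast_gradient_method_convergence_rate
    (n : ℕ) (U : Set (EuclideanSpace ℝ (Fin n)))
    (hUne : U.Nonempty) (hUcl : IsClosed U) (hUconv : Convex ℝ U)
    (J : Matrix (Fin n) (Fin n) ℝ) (hJsymm : J.IsSymm) (q : Fin n → ℝ)
    (lmin lmax : ℝ) (hl0 : 0 < lmin) (hll : lmin ≤ lmax)
    (hcurv : ∀ v : EuclideanSpace ℝ (Fin n),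
      lmin * ‖v‖ ^ 2 ≤ v ⬝ᵥ J.mulVec v ∧ v ⬝ᵥ J.mulVec v ≤ lmax * ‖v‖ ^ 2)
    (f : EuclideanSpace ℝ (Fin n) → ℝ)
    (hf : ∀ u, f u = (1 / 2) * (u ⬝ᵥ J.mulVec u) + q ⬝ᵥ u)
    (uStar : EuclideanSpace ℝ (Fin n))
    (huStar : uStar ∈ U ∧ ∀ u ∈ U, f uStar ≤ f u)
    (β : ℝ) (hβ : β = (Real.sqrt lmax - Real.sqrt lmin) / (Real.sqrt lmax + Real.sqrt lmin))
    (P : EuclideanSpace ℝ (Fin n) → EuclideanSpace ℝ (Fin n))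
    (hP : ∀ z, IsProj U z (P z))
    (u y : ℕ → EuclideanSpace ℝ (Fin n))
    (hinit : u 1 = y 1) (hy1 : y 1 ∈ U)
    (hu : ∀ i ≥ 1, u (i + 1) = P (y i - lmax⁻¹ • (WithLp.equiv 2 (Fin n → ℝ)).symm (J.mulVec (y i) + q)))
    (hyrec : ∀ i ≥ 1, y (i + 1) = (1 + β) • u (i + 1) - β • u i) :
    ∀ i ≥ 1, f (u i) - f uStar ≤
      (1 - Real.sqrt (lmin / lmax)) ^ (i - 1) *
        (f (u 1) - f uStar + (lmin / 2) * ‖u 1 - uStar‖ ^ 2) := by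
  obtain ⟨huSU, hmin⟩ := huStar
  have hlmax : (0:ℝ) < lmax := lt_of_lt_of_le hl0 hll
  set θ : ℝ := Real.sqrt (lmin / lmax) with hθdef
  have hθpos : 0 < θ := Real.sqrt_pos.2 (div_pos hl0 hlmax)
  have hθ1 : θ ≤ 1 := by
    rw [hθdef, show (1:ℝ) = Real.sqrt 1 from (Real.sqrt_one).symm]
    exact Real.sqrt_le_sqrt ((div_le_one hlmax).2 hll)
  have hθsq : θ ^ 2 = lmin / lmax := Real.sq_sqrt (le_of_lt (div_pos hl0 hlmax))
  have hθsq' : θ ^ 2 * lmax = lmin := by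
    rw [hθsq]; field_simp
  have hsl : (0:ℝ) < Real.sqrt lmin := Real.sqrt_pos.2 hl0
  have htl : (0:ℝ) < Real.sqrt lmax := Real.sqrt_pos.2 hlmax
  have hθst : θ = Real.sqrt lmin / Real.sqrt lmax := by
    rw [hθdef, Real.sqrt_div (le_of_lt hl0)]
  have hb2 : (1 + θ) * β = 1 - θ := by
    rw [hβ, hθst]
    have h1 : Real.sqrt lmax ≠ 0 := ne_of_gt htl
    have h2 : Real.sqrt lmax + Real.sqrt lmin ≠ 0 := by positivity
    field_simp
  have hb1 : (1 + θ) * (1 + β) = 2 := by linear_combination hb2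
  -- the auxiliary sequence
  set v : ℕ → EuclideanSpace ℝ (Fin n) :=
    fun i => if i ≤ 1 then u 1 else u (i-1) + θ⁻¹ • (u i - u (i-1)) with hvdef
  have hv1 : v 1 = u 1 := if_pos (le_refl 1)
  have hvsucc : ∀ i, 1 ≤ i → v (i + 1) = u i + θ⁻¹ • (u (i+1) - u i) := by
    intro i hi
    have h2 : ¬ (i + 1 ≤ 1) := by omega
    simp only [hvdef, if_neg h2, Nat.add_sub_cancel]
  -- membership
  have hmemU : ∀ i, 1 ≤ i → u i ∈ U := by
    refine Nat.le_induction ?_ fun i hi ih => ?_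
    · rw [hinit]; exact hy1
    · rw [hu i hi]; exact (hP _).1
  -- invariant
  have hinv : ∀ i, 1 ≤ i → (1 + θ) • y i = θ • v i + u i := by
    refine Nat.le_induction ?_ fun i hi ih => ?_
    · rw [hv1, ← hinit, add_smul, one_smul]; abel
    · rw [hyrec i hi, hvsucc i hi]
      have hθne : θ ≠ 0 := ne_of_gt hθpos
      match_scalars
      · field_simp
        linear_combination hb1
      · field_simp
        linear_combination -hb2
  -- potential one-step decrease
  have hstep : ∀ i, 1 ≤ i →
      f (u (i+1)) - f uStar + (lmin/2) * ‖v (i+1) - uStar‖^2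
        ≤ (1-θ) * (f (u i) - f uStar + (lmin/2) * ‖v i - uStar‖^2) := by
    intro i hi
    have hθne : θ ≠ 0 := ne_of_gt hθpos
    have hproj : u (i+1) ∈ U ∧ ∀ w ∈ U,
        dist (y i - lmax⁻¹ • (WithLp.equiv 2 (Fin n → ℝ)).symm (J.mulVec (y i) + q)) (u (i+1)) ≤
        dist (y i - lmax⁻¹ • (WithLp.equiv 2 (Fin n → ℝ)).symm (J.mulVec (y i) + q)) w := by
      rw [hu i hi]; exact hP _
    have S1 := fgm_key_step hUconv J hJsymm q hl0 hll hcurv f hf (y i) (u (i+1)) hproj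
      (u i) (hmemU i hi)
    have S2 := fgm_key_step hUconv J hJsymm q hl0 hll hcurv f hf (y i) (u (i+1)) hproj
      uStar huSU
    set G : EuclideanSpace ℝ (Fin n) := lmax • (y i - u (i+1)) with hG
    set x : EuclideanSpace ℝ (Fin n) := v i - uStar with hx
    set z : EuclideanSpace ℝ (Fin n) := y i - uStar with hz
    set b : EuclideanSpace ℝ (Fin n) := (θ/lmin) • G with hb
    set a : EuclideanSpace ℝ (Fin n) := (1-θ) • x + θ • z with ha
    have hviv : θ • v i = (1+θ) • y i - u i := by
      rw [eq_sub_iff_add_eq]; exact (hinv i hi).symm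
    have hvi : v i = θ⁻¹ • ((1+θ) • y i - u i) := by
      rw [← hviv, smul_smul, inv_mul_cancel₀ hθne, one_smul]
    have hlmaxne : lmax ≠ 0 := ne_of_gt hlmax
    have hlminne : lmin ≠ 0 := ne_of_gt hl0
    have hGup : u (i+1) = y i - lmax⁻¹ • G := by
      rw [hG, smul_smul, inv_mul_cancel₀ (ne_of_gt hlmax), one_smul]; abel
    -- v (i+1) - uStar = a - b
    have hva : v (i+1) - uStar = a - b := by
      rw [hvsucc i hi, ha, hb, hx, hz, hvi, hGup]
      match_scalars
      all_goals field_simp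
      all_goals try ring
      all_goals try linear_combination hθsq'
      all_goals try linear_combination -hθsq'
      all_goals try linear_combination lmin * hθsq'
      all_goals try linear_combination (-lmin) * hθsq'
      all_goals try linear_combination lmax * hθsq'
      all_goals try linear_combination (-lmax) * hθsq'
    -- norm expansions
    have hnorm1 : ‖a - b‖^2 = ‖a‖^2 - 2*⟪a,b⟫ + ‖b‖^2 := norm_sub_sq_real a b
    have hnorm2 : ‖a‖^2 = (1-θ)^2*‖x‖^2 + 2*((1-θ)*θ)*⟪x,z⟫ + θ^2*‖z‖^2 := by
      rw [ha, norm_add_sq_real, norm_smul, norm_smul, real_inner_smul_left,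
        real_inner_smul_right, Real.norm_eq_abs, Real.norm_eq_abs,
        abs_of_nonneg (by linarith), abs_of_nonneg (le_of_lt hθpos), mul_pow, mul_pow]
      ring
    have hxz : ‖x - z‖^2 = ‖x‖^2 - 2*⟪x,z⟫ + ‖z‖^2 := norm_sub_sq_real x z
    have hconv : (lmin/2) * ‖a‖^2 ≤ (lmin/2) * ((1-θ)*‖x‖^2 + θ*‖z‖^2) := by
      have key : (1-θ)*‖x‖^2 + θ*‖z‖^2 - ‖a‖^2 = θ*(1-θ)*‖x-z‖^2 := by
        rw [hnorm2, hxz]; ring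
      have hnn : 0 ≤ θ*(1-θ)*‖x-z‖^2 :=
        mul_nonneg (mul_nonneg (le_of_lt hθpos) (by linarith)) (sq_nonneg _)
      nlinarith [hl0]
    have hscal1 : ∀ p r : ℝ, lmin * ((θ/lmin) * ((1-θ)*p + θ*r))
        = θ*(1-θ)*p + θ^2*r := by
      intro p r; field_simp
    have habraw : ⟪a,b⟫ = (θ/lmin) * ((1-θ)*⟪G,x⟫ + θ*⟪G,z⟫) := by
      rw [real_inner_comm, hb, real_inner_smul_left, ha, inner_add_right,
        real_inner_smul_right, real_inner_smul_right,
        real_inner_comm x G, real_inner_comm z G]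
    have hab : lmin * ⟪a,b⟫ = θ*(1-θ)*⟪G,x⟫ + θ^2*⟪G,z⟫ := by
      rw [habraw, hscal1]
    have hscal2 : ∀ s : ℝ, (lmin/2) * ((θ/lmin)^2 * s) = (1/(2*lmax)) * s := by
      intro s
      rw [div_pow, hθsq]
      field_simp
    have hbb : (lmin/2) * ‖b‖^2 = (1/(2*lmax)) * ‖G‖^2 := by
      rw [hb, norm_smul, Real.norm_eq_abs, abs_of_nonneg (by positivity), mul_pow, hscal2]
    -- the cross relation
    have hxe : θ • x = (y i - u i) + θ • z := by
      rw [hx, hz, smul_sub, hviv, smul_sub]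
      match_scalars <;> ring
    have hc : θ * ⟪G,x⟫ = ⟪G, y i - u i⟫ + θ * ⟪G,z⟫ := by
      rw [← real_inner_smul_right, hxe, inner_add_right, real_inner_smul_right]
    -- rewrite S1, S2
    have f1 : ⟪G, u i - y i⟫ = -⟪G, y i - u i⟫ := by
      rw [← inner_neg_right]; congr 1; abel
    have f2 : ⟪G, uStar - y i⟫ = -⟪G, z⟫ := by
      rw [← inner_neg_right, hz]; congr 1; abel
    have f3 : ‖uStar - y i‖ = ‖z‖ := by rw [hz, norm_sub_rev]
    rw [f1] at S1
    rw [f2, f3] at S2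
    have T1 := mul_le_mul_of_nonneg_left S1 (by linarith : (0:ℝ) ≤ 1-θ)
    have T2 := mul_le_mul_of_nonneg_left S2 (le_of_lt hθpos)
    have hc2 : θ*(1-θ)*⟪G,x⟫ = (1-θ)*⟪G, y i - u i⟫ + θ*(1-θ)*⟪G,z⟫ := by
      linear_combination (1-θ) * hc
    have hC1 : (0:ℝ) ≤ (1-θ) * ((lmin/2) * ‖u i - y i‖^2) := by
      have : (0:ℝ) ≤ 1 - θ := by linarith
      positivity
    rw [hva]
    have heq : (lmin/2)*‖a-b‖^2 = (lmin/2)*‖a‖^2 - lmin*⟪a,b⟫ + (lmin/2)*‖b‖^2 := by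
      rw [hnorm1]; ring
    linarith [heq, hconv, hab, hc2, hbb, T1, T2, hC1]
  -- conclude by induction
  have hΦ : ∀ i, 1 ≤ i →
      f (u i) - f uStar + (lmin/2) * ‖v i - uStar‖^2
        ≤ (1-θ)^(i-1) * (f (u 1) - f uStar + (lmin/2) * ‖u 1 - uStar‖^2) := by
    refine Nat.le_induction ?_ fun i hi ih => ?_
    · simp [hv1]
    · have h1θ : (0:ℝ) ≤ 1 - θ := by linarith
      have := hstep i hi
      have h2 := mul_le_mul_of_nonneg_left ih h1θ
      have hexp : (1-θ) * (1-θ)^(i-1) = (1-θ)^(i+1-1) := by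
        rw [← pow_succ']
        congr 1
        omega
      calc f (u (i+1)) - f uStar + (lmin/2) * ‖v (i+1) - uStar‖^2
          ≤ (1-θ) * (f (u i) - f uStar + (lmin/2) * ‖v i - uStar‖^2) := this
        _ ≤ (1-θ) * ((1-θ)^(i-1) * (f (u 1) - f uStar + (lmin/2) * ‖u 1 - uStar‖^2)) := h2
        _ = (1-θ)^(i+1-1) * (f (u 1) - f uStar + (lmin/2) * ‖u 1 - uStar‖^2) := by
            rw [← mul_assoc, hexp]
  intro i hi
  have h := hΦ i hi
  have hnn : (0:ℝ) ≤ (lmin/2) * ‖v i - uStar‖^2 := by positivity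
  linarith
end
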